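/- arXiv:0711.2869 — 5 statements merged into one kernel-verified Lean document; each statement's English description precedes it below -/
import Mathlib

section
/- Let U be a monotone unitary family on ℝ acting on a finite-dimensional complex inner product space V of dimension M ≥ 1, satisfying dmin·‖φ‖² ≤ ⟨D(x)φ,φ⟩ for all x and φ, and ‖U''(x)‖ ≤ d₂ for all x, where dmin, d₂ > 0. Let I ⊆ ℝ be an interval of length at most 2·dmin/(d₂·M). Then the subspaces W(x) = ker(I − U(x)) for x ∈ I are linearly independent: if S ⊆ I ∩ Z is a finite set, φ_x ∈ W(x) for each x ∈ S, and Σ_{x ∈ S} φ_x = 0, then φ_x = 0 for all x ∈ S. -/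
open scoped InnerProductSpace

set_option maxHeartbeats 1000000


lemma integ_lin (a b : ℝ) : ∫ t in a..b, (t - a) = (b - a)^2/2 := by
  have h1 : IntervalIntegrable (fun t : ℝ => t) MeasureTheory.volume a b :=
    (continuous_id).intervalIntegrable a b
  have h2 : IntervalIntegrable (fun _ : ℝ => a) MeasureTheory.volume a b :=
    (continuous_const).intervalIntegrable a b
  rw [intervalIntegral.integral_sub h1 h2, integral_id, intervalIntegral.integral_const]
  simp [smul_eq_mul]; ring

lemma taylor2 {E : Type*} [NormedAddCommGroup E] [NormedSpace ℝ E] [CompleteSpace E]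
    (f f' f'' : ℝ → E) (hf : ∀ t, HasDerivAt f (f' t) t) (hf' : ∀ t, HasDerivAt f' (f'' t) t)
    (d₂ : ℝ) (hb : ∀ t, ‖f'' t‖ ≤ d₂) (x y : ℝ) :
    ‖f y - f x - (y - x) • f' x‖ ≤ d₂ / 2 * (y - x) ^ 2 := by
  have hlip : ∀ a b : ℝ, ‖f' b - f' a‖ ≤ d₂ * |b - a| := by
    intro a b
    have := Convex.norm_image_sub_le_of_norm_hasDerivWithin_le
      (f := f') (f' := f'') (s := Set.univ) (C := d₂) (x := a) (y := b)
      (fun t _ => (hf' t).hasDerivWithinAt) (fun t _ => hb t) convex_univ trivial trivial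
    simpa [Real.norm_eq_abs] using this
  set g : ℝ → E := fun t => f t - f x - (t - x) • f' x with hgdef
  have hgd : ∀ t, HasDerivAt g (f' t - f' x) t := by
    intro t
    have h1 : HasDerivAt (fun t : ℝ => (t - x) • f' x) ((1:ℝ) • f' x) t :=
      ((hasDerivAt_id t).sub_const x).smul_const (f' x)
    have h2 := ((hf t).sub_const (f x)).sub h1
    rw [one_smul] at h2
    exact h2
  have hdiff : Differentiable ℝ f' := fun t => (hf' t).differentiableAt
  have hcont : Continuous fun t => f' t - f' x := (hdiff.continuous).sub continuous_const
  have key : (∫ t in x..y, (f' t - f' x)) = g y - g x :=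
    intervalIntegral.integral_eq_sub_of_hasDerivAt (fun t _ => hgd t)
      (hcont.intervalIntegrable x y)
  have hgx : g x = 0 := by simp [hgdef]
  have hgy : ‖g y‖ ≤ d₂ / 2 * (y - x) ^ 2 := by
    rcases le_total x y with h | h
    · calc ‖g y‖ = ‖∫ t in x..y, (f' t - f' x)‖ := by rw [key, hgx, sub_zero]
        _ ≤ ∫ t in x..y, ‖f' t - f' x‖ := intervalIntegral.norm_integral_le_integral_norm h
        _ ≤ ∫ t in x..y, d₂ * (t - x) := by
            apply intervalIntegral.integral_mono_on h
              (hcont.norm.intervalIntegrable x y)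
              ((continuous_const.mul (continuous_id.sub continuous_const)).intervalIntegrable x y)
            intro t ht
            have h2 := hlip x t
            rwa [abs_of_nonneg (by linarith [ht.1] : (0:ℝ) ≤ t - x)] at h2
        _ = d₂ / 2 * (y - x) ^ 2 := by
            rw [intervalIntegral.integral_const_mul, integ_lin]; ring
    · calc ‖g y‖ = ‖∫ t in y..x, (f' t - f' x)‖ := by
            rw [intervalIntegral.integral_symm, key, hgx, sub_zero, norm_neg]
        _ ≤ ∫ t in y..x, ‖f' t - f' x‖ := intervalIntegral.norm_integral_le_integral_norm h
        _ ≤ ∫ t in y..x, d₂ * (x - t) := by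
            apply intervalIntegral.integral_mono_on h
              (hcont.norm.intervalIntegrable y x)
              ((continuous_const.mul (continuous_const.sub continuous_id)).intervalIntegrable y x)
            intro t ht
            have h2 := hlip x t
            rwa [abs_of_nonpos (by linarith [ht.2] : t - x ≤ 0), neg_sub] at h2
        _ = d₂ / 2 * (y - x) ^ 2 := by
            have h3 : (∫ t in y..x, d₂ * (x - t)) = d₂ * ∫ t in y..x, (x - t) := by
              rw [intervalIntegral.integral_const_mul]
            have h4 : (∫ t in y..x, (x - t)) = (x - y) ^ 2 / 2 := by
              have h5 : (∫ t in y..x, (x - t)) = - ∫ t in x..y, (x - t) := by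
                rw [intervalIntegral.integral_symm]
              have h6 : (∫ t in x..y, (x - t)) = - ∫ t in x..y, (t - x) := by
                rw [← intervalIntegral.integral_neg]; congr 1; funext t; ring
              rw [h5, h6, integ_lin]; ring
            rw [h3, h4]; ring
  simpa [hgdef] using hgy

lemma fixed_of_ker {V : Type*} [NormedAddCommGroup V] [InnerProductSpace ℂ V]
    (A : V →L[ℂ] V) (φ : V) (h : φ ∈ LinearMap.ker ((1 - A : V →L[ℂ] V) : V →ₗ[ℂ] V)) : A φ = φ := by
  have h2 : (1 - A) φ = 0 := LinearMap.mem_ker.mp h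
  rw [ContinuousLinearMap.sub_apply, ContinuousLinearMap.one_apply, sub_eq_zero] at h2
  exact h2.symm

lemma star_fixed {V : Type*} [NormedAddCommGroup V] [InnerProductSpace ℂ V]
    [CompleteSpace V]
    (A : V →L[ℂ] V) (hA : A ∈ unitary (V →L[ℂ] V)) (φ : V) (h : A φ = φ) :
    (star A) φ = φ := by
  conv_lhs => rw [← h]
  have h1 : star A * A = 1 := (Unitary.mem_iff.mp hA).1
  calc (star A) (A φ) = (star A * A) φ := rfl
    _ = φ := by rw [h1]; rfl

lemma pair_est {V : Type*} [NormedAddCommGroup V] [InnerProductSpace ℂ V]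
    [FiniteDimensional ℂ V]
    (U U' U'' : ℝ → (V →L[ℂ] V))
    (hunit : ∀ x, U x ∈ unitary (V →L[ℂ] V))
    (hU' : ∀ x, HasDerivAt U (U' x) x)
    (hU'' : ∀ x, HasDerivAt U' (U'' x) x)
    (d₂ : ℝ) (hupper : ∀ x, ‖U'' x‖ ≤ d₂)
    (x y : ℝ) (hxy : x ≠ y) (φ ψ : V) (hφ : U x φ = φ) (hψ : U y ψ = ψ) :
    ‖⟪(U' x) φ, ψ⟫_ℂ‖ ≤ d₂ / 2 * |y - x| * (‖φ‖ * ‖ψ‖) := by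
  haveI : CompleteSpace V := FiniteDimensional.complete ℂ V
  have hadj : (ContinuousLinearMap.adjoint (U y)) ψ = ψ := by
    rw [← ContinuousLinearMap.star_eq_adjoint]; exact star_fixed _ (hunit y) _ hψ
  have horth : ⟪(U y) φ, ψ⟫_ℂ = ⟪φ, ψ⟫_ℂ := by
    rw [← ContinuousLinearMap.adjoint_inner_right, hadj]
  have hzero : ⟪(U y - U x) φ, ψ⟫_ℂ = 0 := by
    rw [ContinuousLinearMap.sub_apply, inner_sub_left, horth, hφ, sub_self]
  set R : V →L[ℂ] V := U y - U x - (y - x) • U' x with hR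
  have hTay : ‖R‖ ≤ d₂ / 2 * (y - x) ^ 2 := taylor2 U U' U'' hU' hU'' d₂ hupper x y
  have hsplit : ((y - x : ℝ)) • ⟪(U' x) φ, ψ⟫_ℂ = - ⟪R φ, ψ⟫_ℂ := by
    have happ : R φ = (U y - U x) φ - (y - x) • ((U' x) φ) := by
      simp [hR, ContinuousLinearMap.sub_apply, ContinuousLinearMap.smul_apply]
    rw [happ, inner_sub_left, hzero, zero_sub, neg_neg]
    exact (inner_smul_real_left _ _ _).symm
  have hnorm : |y - x| * ‖⟪(U' x) φ, ψ⟫_ℂ‖ ≤ (d₂ / 2 * (y - x) ^ 2) * (‖φ‖ * ‖ψ‖) := by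
    have h1 : ‖((y - x : ℝ)) • ⟪(U' x) φ, ψ⟫_ℂ‖ = |y - x| * ‖⟪(U' x) φ, ψ⟫_ℂ‖ := by
      rw [norm_smul, Real.norm_eq_abs]
    have h3 : ‖R φ‖ ≤ ‖R‖ * ‖φ‖ := R.le_opNorm φ
    calc |y - x| * ‖⟪(U' x) φ, ψ⟫_ℂ‖ = ‖⟪R φ, ψ⟫_ℂ‖ := by rw [← h1, hsplit, norm_neg]
      _ ≤ ‖R φ‖ * ‖ψ‖ := norm_inner_le_norm _ _
      _ ≤ (‖R‖ * ‖φ‖) * ‖ψ‖ := mul_le_mul_of_nonneg_right h3 (norm_nonneg _)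
      _ ≤ ((d₂ / 2 * (y - x) ^ 2) * ‖φ‖) * ‖ψ‖ := by
          apply mul_le_mul_of_nonneg_right _ (norm_nonneg _)
          exact mul_le_mul_of_nonneg_right hTay (norm_nonneg _)
      _ = (d₂ / 2 * (y - x) ^ 2) * (‖φ‖ * ‖ψ‖) := by ring
  have habs : (0:ℝ) < |y - x| := abs_pos.mpr (sub_ne_zero.mpr (Ne.symm hxy))
  have hsq : (y - x) ^ 2 = |y - x| * |y - x| := by rw [← sq_abs]; ring
  rw [hsq] at hnorm
  have h5 : ‖⟪(U' x) φ, ψ⟫_ℂ‖ ≤ (d₂ / 2 * (|y - x| * |y - x|) * (‖φ‖ * ‖ψ‖)) / |y - x| := by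
    rw [le_div_iff₀ habs, mul_comm]; exact hnorm
  calc ‖⟪(U' x) φ, ψ⟫_ℂ‖ ≤ _ := h5
    _ = d₂ / 2 * |y - x| * (‖φ‖ * ‖ψ‖) := by
        rw [show d₂ / 2 * (|y - x| * |y - x|) * (‖φ‖ * ‖ψ‖)
            = (d₂ / 2 * |y - x| * (‖φ‖ * ‖ψ‖)) * |y - x| by ring,
          mul_div_assoc, div_self habs.ne', mul_one]


lemma winding {V : Type*} [NormedAddCommGroup V] [InnerProductSpace ℂ V]
    [FiniteDimensional ℂ V] (hdim : Module.finrank ℂ V = 1)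
    (U U' U'' : ℝ → (V →L[ℂ] V))
    (hunit : ∀ x, U x ∈ unitary (V →L[ℂ] V))
    (hU' : ∀ x, HasDerivAt U (U' x) x)
    (hU'' : ∀ x, HasDerivAt U' (U'' x) x)
    (D : ℝ → (V →L[ℂ] V))
    (hD : ∀ x, D x = Complex.I⁻¹ • (U' x ∘L star (U x)))
    (dmin d₂ : ℝ) (hdmin : 0 < dmin) (hd₂ : 0 < d₂)
    (hlower : ∀ x, ∀ φ : V, dmin * ‖φ‖ ^ 2 ≤ (⟪D x φ, φ⟫_ℂ).re)
    (hupper : ∀ x, ‖U'' x‖ ≤ d₂)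
    (x y : ℝ) (hxy : x < y) (hlen : y - x ≤ 2 * dmin / d₂)
    (ψ : V) (hψ0 : ψ ≠ 0) (hx : U x ψ = ψ) (hy : U y ψ = ψ) : False := by
  haveI : CompleteSpace V := FiniteDimensional.complete ℂ V
  set n : ℝ := ‖ψ‖ ^ 2 with hn
  have hψnorm : 0 < ‖ψ‖ := norm_pos_iff.mpr hψ0
  have hnpos : 0 < n := by positivity
  have hnC : ((n : ℂ)) ≠ 0 := by exact_mod_cast ne_of_gt hnpos
  have hinner_self : ⟪ψ, ψ⟫_ℂ = (n : ℂ) := by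
    rw [inner_self_eq_norm_sq_to_K]; norm_cast
  have hspan : ∀ v : V, ∃ c : ℂ, v = c • ψ := by
    have h1 : Submodule.span ℂ {ψ} = ⊤ :=
      Submodule.eq_top_of_finrank_eq (by rw [finrank_span_singleton hψ0, hdim])
    intro v
    have hv : v ∈ Submodule.span ℂ ({ψ} : Set V) := by rw [h1]; trivial
    rcases Submodule.mem_span_singleton.mp hv with ⟨c, hc⟩
    exact ⟨c, hc.symm⟩
  set u : ℝ → ℂ := fun t => ⟪ψ, (U t) ψ⟫_ℂ / (n : ℂ) with hudef
  set uD : ℝ → ℂ := fun t => ⟪ψ, (U' t) ψ⟫_ℂ / (n : ℂ) with huDdef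
  set uDD : ℝ → ℂ := fun t => ⟪ψ, (U'' t) ψ⟫_ℂ / (n : ℂ) with huDDdef
  have hscal : ∀ (A : V →L[ℂ] V) (c : ℂ), A ψ = c • ψ → ⟪ψ, A ψ⟫_ℂ / (n:ℂ) = c := by
    intro A c hc
    rw [hc, inner_smul_right, hinner_self, mul_div_assoc, div_self hnC, mul_one]
  have hu : ∀ t, (U t) ψ = u t • ψ := by
    intro t
    rcases hspan ((U t) ψ) with ⟨c, hc⟩
    simp only [hudef]; rw [hscal _ c hc]; exact hc
  -- derivatives of curves
  have happ : ∀ (A : (V →L[ℂ] V)) , True := fun _ => trivial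
  have hcurve : ∀ t, HasDerivAt (fun s => (U s) ψ) ((U' t) ψ) t := by
    intro t
    have hL := ((ContinuousLinearMap.apply ℂ V ψ).restrictScalars ℝ).hasFDerivAt
      (x := U t)
    exact (hL.comp_hasDerivAt t (hU' t) : HasDerivAt _ _ t)
  have hcurve' : ∀ t, HasDerivAt (fun s => (U' s) ψ) ((U'' t) ψ) t := by
    intro t
    have hL := ((ContinuousLinearMap.apply ℂ V ψ).restrictScalars ℝ).hasFDerivAt
      (x := U' t)
    exact (hL.comp_hasDerivAt t (hU'' t) : HasDerivAt _ _ t)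
  have hinnerD : ∀ (f : ℝ → V) (g : V) (t : ℝ), HasDerivAt f g t →
      HasDerivAt (fun s => ⟪ψ, f s⟫_ℂ) (⟪ψ, g⟫_ℂ) t := by
    intro f g t hf
    have hL := (((innerSL ℂ ψ)).restrictScalars ℝ).hasFDerivAt (x := f t)
    exact (hL.comp_hasDerivAt t hf : HasDerivAt _ _ t)
  have hu' : ∀ t, HasDerivAt u (uD t) t := fun t =>
    ((hinnerD _ _ t (hcurve t)).div_const _)
  have huD' : ∀ t, HasDerivAt uD (uDD t) t := fun t =>
    ((hinnerD _ _ t (hcurve' t)).div_const _)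
  have huDvec : ∀ t, (U' t) ψ = uD t • ψ := by
    intro t
    have h1 : HasDerivAt (fun s => u s • ψ) (uD t • ψ) t := (hu' t).smul_const ψ
    have h2 : (fun s => (U s) ψ) = fun s => u s • ψ := funext hu
    have h3 : HasDerivAt (fun s => (U s) ψ) (uD t • ψ) t := h2 ▸ h1
    exact (hcurve t).unique h3
  -- modulus one
  have hmod : ∀ t, u t * star (u t) = 1 := by
    intro t
    have h1 : star (U t) * U t = 1 := (Unitary.mem_iff.mp (hunit t)).1
    have h2 : ⟪(U t) ψ, (U t) ψ⟫_ℂ = ⟪ψ, ψ⟫_ℂ := by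
      rw [← ContinuousLinearMap.adjoint_inner_right, ← ContinuousLinearMap.star_eq_adjoint]
      congr 1
      calc (star (U t)) ((U t) ψ) = (star (U t) * U t) ψ := rfl
        _ = ψ := by rw [h1]; rfl
    rw [hu t, inner_smul_left, inner_smul_right, hinner_self] at h2
    have h3 : (starRingEnd ℂ) (u t) * u t = 1 := by
      apply mul_right_cancel₀ hnC
      rw [one_mul, mul_assoc]
      exact h2
    rw [mul_comm] at h3
    exact h3
  have hmod' : ∀ t, star (u t) * u t = 1 := fun t => by rw [mul_comm]; exact hmod t
  have hu1 : ∀ t, ‖u t‖ = 1 := by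
    intro t
    have := congrArg norm (hmod t)
    rw [norm_mul, norm_star, norm_one] at this
    nlinarith [norm_nonneg (u t)]
  -- z and a
  set z : ℝ → ℂ := fun t => uD t * star (u t) with hzdef
  set a : ℝ → ℝ := fun t => (z t).im with hadef
  have hstaru : ∀ t, HasDerivAt (fun s => star (u s)) (star (uD t)) t := fun t => (hu' t).star
  have hz' : ∀ t, HasDerivAt z (uDD t * star (u t) + uD t * star (uD t)) t := fun t =>
    (huD' t).mul (hstaru t)
  have hrez : ∀ t, (z t).re = 0 := by
    intro t
    have hder : HasDerivAt (fun s => u s * star (u s))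
        (uD t * star (u t) + u t * star (uD t)) t := (hu' t).mul (hstaru t)
    have heq : (fun s => u s * star (u s)) = fun _ => (1 : ℂ) := funext hmod
    rw [heq] at hder
    have h0 : uD t * star (u t) + u t * star (uD t) = 0 :=
      hder.unique (hasDerivAt_const t 1)
    have h1 : u t * star (uD t) = star (z t) := by
      rw [hzdef]; simp only [star_mul, star_star]
    rw [h1] at h0
    have h3 := congrArg Complex.re h0
    simp only [Complex.add_re, Complex.zero_re] at h3
    have h4 : (star (z t)).re = (z t).re := by
      simp [RCLike.star_def]
    linarith
  have hzIa : ∀ t, z t = Complex.I * (a t : ℂ) := by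
    intro t
    apply Complex.ext
    · simp [hrez t]
    · simp [hadef]
  have key1 : ∀ t, uD t = Complex.I * (a t : ℂ) * u t := by
    intro t
    calc uD t = uD t * (star (u t) * u t) := by rw [hmod' t, mul_one]
      _ = z t * u t := by rw [hzdef]; ring
      _ = Complex.I * (a t : ℂ) * u t := by rw [hzIa t]
  -- lower bound on a
  have ha_low : ∀ t, dmin ≤ a t := by
    intro t
    have hstarU : (star (U t)) ψ = star (u t) • ψ := by
      have h1 : (U t) (star (u t) • ψ) = ψ := by
        rw [ContinuousLinearMap.map_smul, hu t, smul_smul, mul_comm, hmod t, one_smul]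
      conv_lhs => rw [← h1]
      have h2 : star (U t) * U t = 1 := (Unitary.mem_iff.mp (hunit t)).1
      calc (star (U t)) ((U t) (star (u t) • ψ)) = (star (U t) * U t) (star (u t) • ψ) := rfl
        _ = star (u t) • ψ := by rw [h2]; rfl
    have hc : Complex.I⁻¹ * (star (u t) * uD t) = (a t : ℂ) := by
      rw [key1 t]
      have h5 : Complex.I⁻¹ * (star (u t) * (Complex.I * (a t : ℂ) * u t))
          = (Complex.I⁻¹ * Complex.I) * (star (u t) * u t) * (a t : ℂ) := by ring
      rw [h5, inv_mul_cancel₀ Complex.I_ne_zero, hmod' t, one_mul, one_mul]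
    have hDapp : (D t) ψ = (a t : ℂ) • ψ := by
      rw [hD t, ContinuousLinearMap.smul_apply, ContinuousLinearMap.comp_apply, hstarU,
        ContinuousLinearMap.map_smul, huDvec t, smul_smul, smul_smul]
      congr 1
      rw [← hc]; ring
    have hl := hlower t ψ
    rw [hDapp, inner_smul_left, hinner_self] at hl
    have h6 : ((starRingEnd ℂ) ((a t : ℂ)) * (n : ℂ)).re = a t * n := by
      simp [Complex.mul_re]
    rw [h6] at hl
    rw [hn] at hl
    nlinarith [hnpos]
  -- upper bound on a
  have huDD_norm : ∀ t, ‖uDD t‖ ≤ d₂ := by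
    intro t
    simp only [huDDdef]
    rw [norm_div]
    have h1 : ‖⟪ψ, (U'' t) ψ⟫_ℂ‖ ≤ ‖ψ‖ * ‖(U'' t) ψ‖ := norm_inner_le_norm _ _
    have h2 : ‖(U'' t) ψ‖ ≤ ‖U'' t‖ * ‖ψ‖ := (U'' t).le_opNorm ψ
    have h3 : ‖((n : ℝ) : ℂ)‖ = n := by
      rw [Complex.norm_real, Real.norm_eq_abs, abs_of_pos hnpos]
    rw [h3, div_le_iff₀ hnpos, hn]
    calc ‖⟪ψ, (U'' t) ψ⟫_ℂ‖ ≤ ‖ψ‖ * ‖(U'' t) ψ‖ := h1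
      _ ≤ ‖ψ‖ * (‖U'' t‖ * ‖ψ‖) := by
          exact mul_le_mul_of_nonneg_left h2 (norm_nonneg _)
      _ ≤ ‖ψ‖ * (d₂ * ‖ψ‖) := by
          apply mul_le_mul_of_nonneg_left _ (norm_nonneg _)
          exact mul_le_mul_of_nonneg_right (hupper t) (norm_nonneg _)
      _ = d₂ * ‖ψ‖ ^ 2 := by ring
  have ha_up : ∀ t, a t ≤ Real.sqrt d₂ := by
    intro t
    have hrez' : (uDD t * star (u t) + uD t * star (uD t)).re = 0 := by
      have hder : HasDerivAt (fun s => (z s).re)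
          ((uDD t * star (u t) + uD t * star (uD t)).re) t := by
        have hL := (Complex.reCLM.hasFDerivAt (x := z t))
        exact (hL.comp_hasDerivAt t (hz' t) : HasDerivAt _ _ t)
      have heq : (fun s => (z s).re) = fun _ => (0:ℝ) := funext hrez
      rw [heq] at hder
      exact hder.unique (hasDerivAt_const t 0)
    have h1 : uD t * star (uD t) = (((a t)^2 : ℝ) : ℂ) := by
      rw [key1 t]
      have hstar : star (Complex.I * (a t : ℂ) * u t)
          = (- Complex.I) * (a t : ℂ) * star (u t) := by
        simp only [star_mul, Complex.star_def, Complex.conj_I, Complex.conj_ofReal]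
        ring
      rw [hstar]
      have : Complex.I * (a t : ℂ) * u t * ((- Complex.I) * (a t : ℂ) * star (u t))
          = (Complex.I * (- Complex.I)) * ((a t : ℂ) * (a t : ℂ)) * (u t * star (u t)) := by
        ring
      have hII : Complex.I * (- Complex.I) = 1 := by
        rw [mul_neg, Complex.I_mul_I, neg_neg]
      rw [this, hII, hmod t, one_mul, mul_one]
      push_cast
      ring
    have h2 : (uD t * star (uD t)).re = (a t)^2 := by rw [h1]; exact Complex.ofReal_re _
    have h3 : (uDD t * star (u t)).re = -((a t)^2) := by
      have := hrez'
      rw [Complex.add_re, h2] at this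
      linarith
    have h4 : (a t)^2 ≤ d₂ := by
      have h5 : |(uDD t * star (u t)).re| ≤ ‖uDD t * star (u t)‖ := Complex.abs_re_le_norm _
      rw [h3, abs_neg, abs_of_nonneg (sq_nonneg _)] at h5
      have h6 : ‖uDD t * star (u t)‖ = ‖uDD t‖ := by
        rw [norm_mul, norm_star, hu1 t, mul_one]
      rw [h6] at h5
      exact le_trans h5 (huDD_norm t)
    have h7 : 0 ≤ a t := le_trans hdmin.le (ha_low t)
    exact (Real.le_sqrt h7 hd₂.le).mpr h4
  -- the angle function
  have ha_cont : Continuous a := by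
    have h1d : Differentiable ℝ uD := fun t => (huD' t).differentiableAt
    have h2d : Differentiable ℝ u := fun t => (hu' t).differentiableAt
    exact Complex.continuous_im.comp (h1d.continuous.mul (continuous_star.comp h2d.continuous))
  set θ : ℝ → ℝ := fun t => ∫ s in x..t, a s with hθdef
  have hθ : ∀ t, HasDerivAt θ (a t) t := by
    intro t
    exact intervalIntegral.integral_hasDerivAt_right (ha_cont.intervalIntegrable x t)
      (ha_cont.stronglyMeasurableAtFilter _ _) ha_cont.continuousAt
  have hexp : ∀ t, HasDerivAt (fun s => Complex.exp (-(Complex.I * (θ s : ℂ))))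
      (Complex.exp (-(Complex.I * (θ t : ℂ))) * (-(Complex.I * (a t : ℂ)))) t := by
    intro t
    have h1 : HasDerivAt (fun s => ((θ s : ℝ) : ℂ)) ((a t : ℂ)) t := (hθ t).ofReal_comp
    have h2 : HasDerivAt (fun s => -(Complex.I * ((θ s : ℝ) : ℂ)))
        (-(Complex.I * (a t : ℂ))) t := (h1.const_mul Complex.I).neg
    exact h2.cexp
  have hh : ∀ t, HasDerivAt (fun s => u s * Complex.exp (-(Complex.I * (θ s : ℂ)))) 0 t := by
    intro t
    have hprod := (hu' t).mul (hexp t)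
    refine hprod.congr_deriv ?_
    rw [key1 t]
    ring
  have hconst := is_const_of_deriv_eq_zero
    (fun t => (hh t).differentiableAt) (fun t => (hh t).deriv) y x
  have hux : u x = 1 := by
    have h1 : u x • ψ = (1:ℂ) • ψ := by rw [← hu x, hx, one_smul]
    exact smul_left_injective ℂ hψ0 h1
  have huy : u y = 1 := by
    have h1 : u y • ψ = (1:ℂ) • ψ := by rw [← hu y, hy, one_smul]
    exact smul_left_injective ℂ hψ0 h1
  have hθx : θ x = 0 := intervalIntegral.integral_same
  have hexp1 : Complex.exp (-(Complex.I * (θ y : ℂ))) = 1 := by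
    have := hconst
    simp only [huy, hux, hθx, one_mul] at this
    rw [this]
    norm_num
  rcases Complex.exp_eq_one_iff.mp hexp1 with ⟨k, hk⟩
  have him := congrArg Complex.im hk
  have hθy : θ y = -(2 * Real.pi * (k : ℝ)) := by
    have h1 : ((θ y : ℝ) : ℂ) = ((-(2 * Real.pi * (k:ℝ)) : ℝ) : ℂ) := by
      apply mul_left_cancel₀ Complex.I_ne_zero
      push_cast
      linear_combination -hk
    exact_mod_cast h1
  have hθy_low : dmin * (y - x) ≤ θ y := by
    have h1 := intervalIntegral.integral_mono_on (μ := MeasureTheory.volume) hxy.le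
      (intervalIntegrable_const)
      (ha_cont.intervalIntegrable x y) (fun t _ => ha_low t)
    rw [intervalIntegral.integral_const, smul_eq_mul] at h1
    calc dmin * (y - x) = (y - x) * dmin := by ring
      _ ≤ θ y := h1
  have hθy_up : θ y ≤ Real.sqrt d₂ * (y - x) := by
    have h1 := intervalIntegral.integral_mono_on (μ := MeasureTheory.volume) hxy.le
      (ha_cont.intervalIntegrable x y)
      (intervalIntegrable_const)
      (fun t _ => ha_up t)
    rw [intervalIntegral.integral_const, smul_eq_mul] at h1
    calc θ y ≤ (y - x) * Real.sqrt d₂ := h1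
      _ = Real.sqrt d₂ * (y - x) := by ring
  have hθpos : 0 < θ y := lt_of_lt_of_le (mul_pos hdmin (sub_pos.mpr hxy)) hθy_low
  have hk_neg : (k : ℝ) ≤ -1 := by
    by_contra hcon
    push_neg at hcon
    have : (0:ℝ) ≤ (k:ℝ) := by
      have : (-1 : ℤ) < k := by exact_mod_cast hcon
      have : (0 : ℤ) ≤ k := by omega
      exact_mod_cast this
    nlinarith [Real.pi_pos]
  have h2pi : 2 * Real.pi ≤ θ y := by
    rw [hθy]
    nlinarith [Real.pi_pos]
  have hdmin_sqrt : dmin ≤ Real.sqrt d₂ := le_trans (ha_low x) (ha_up x)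
  have hsq : Real.sqrt d₂ * Real.sqrt d₂ = d₂ := Real.mul_self_sqrt hd₂.le
  have hsqpos : 0 < Real.sqrt d₂ := Real.sqrt_pos.mpr hd₂
  have hfinal : θ y ≤ 2 := by
    calc θ y ≤ Real.sqrt d₂ * (y - x) := hθy_up
      _ ≤ Real.sqrt d₂ * (2 * dmin / d₂) := by
          apply mul_le_mul_of_nonneg_left hlen hsqpos.le
      _ ≤ Real.sqrt d₂ * (2 * Real.sqrt d₂ / d₂) := by
          gcongr
      _ = 2 := by
          field_simp
          nlinarith [hsq]
  linarith [Real.pi_gt_three]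

lemma pair_est_D {V : Type*} [NormedAddCommGroup V] [InnerProductSpace ℂ V]
    [FiniteDimensional ℂ V]
    (U U' U'' : ℝ → (V →L[ℂ] V))
    (hunit : ∀ x, U x ∈ unitary (V →L[ℂ] V))
    (hU' : ∀ x, HasDerivAt U (U' x) x)
    (hU'' : ∀ x, HasDerivAt U' (U'' x) x)
    (D : ℝ → (V →L[ℂ] V))
    (hD : ∀ x, D x = Complex.I⁻¹ • (U' x ∘L star (U x)))
    (d₂ : ℝ) (hupper : ∀ x, ‖U'' x‖ ≤ d₂)
    (x y : ℝ) (hxy : x ≠ y) (φ ψ : V)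
    (hφ : φ ∈ LinearMap.ker ((1 - U x : V →L[ℂ] V) : V →ₗ[ℂ] V)) (hψ : ψ ∈ LinearMap.ker ((1 - U y : V →L[ℂ] V) : V →ₗ[ℂ] V)) :
    ‖⟪(D x) φ, ψ⟫_ℂ‖ ≤ d₂ / 2 * |y - x| * (‖φ‖ * ‖ψ‖) := by
  haveI : CompleteSpace V := FiniteDimensional.complete ℂ V
  have hUφ : U x φ = φ := fixed_of_ker _ _ hφ
  have hUψ : U y ψ = ψ := fixed_of_ker _ _ hψ
  have hsφ : (star (U x)) φ = φ := star_fixed _ (hunit x) _ hUφ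
  have hDφ : (D x) φ = Complex.I⁻¹ • ((U' x) φ) := by
    rw [hD x, ContinuousLinearMap.smul_apply, ContinuousLinearMap.comp_apply, hsφ]
  have h1 : ‖⟪(D x) φ, ψ⟫_ℂ‖ = ‖⟪(U' x) φ, ψ⟫_ℂ‖ := by
    rw [hDφ, inner_smul_left, norm_mul, RCLike.norm_conj, norm_inv, Complex.norm_I,
      inv_one, one_mul]
  rw [h1]
  exact pair_est U U' U'' hunit hU' hU'' d₂ hupper x y hxy φ ψ hUφ hUψ


/-- **Independence of eigenspaces.** For a monotone unitary family with
`D(x) ≥ dmin > 0` and `‖U''(x)‖ ≤ d₂`, and an interval `I` of length at most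
`2·dmin/(d₂·M)`, the spaces `W(x) = ker(I − U(x))`, `x ∈ I`, are linearly
independent. -/
theorem independence_of_eigenspaces_of_monotone_unitary_family
    {V : Type*} [NormedAddCommGroup V] [InnerProductSpace ℂ V] [FiniteDimensional ℂ V]
    (M : ℕ) (hM : 1 ≤ M) (hdim : Module.finrank ℂ V = M)
    (U U' U'' : ℝ → (V →L[ℂ] V))
    (hunit : ∀ x, U x ∈ unitary (V →L[ℂ] V))
    (hanal : ∀ x, AnalyticAt ℝ U x)
    (hU' : ∀ x, HasDerivAt U (U' x) x)
    (hU'' : ∀ x, HasDerivAt U' (U'' x) x)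
    (D : ℝ → (V →L[ℂ] V))
    (hD : ∀ x, D x = Complex.I⁻¹ • (U' x ∘L star (U x)))
    (dmin d₂ : ℝ) (hdmin : 0 < dmin) (hd₂ : 0 < d₂)
    (hlower : ∀ x, ∀ φ : V, dmin * ‖φ‖ ^ 2 ≤ (⟪D x φ, φ⟫_ℂ).re)
    (hupper : ∀ x, ‖U'' x‖ ≤ d₂)
    (I : Set ℝ) (hIconn : I.OrdConnected)
    (hlen : ∀ a ∈ I, ∀ b ∈ I, |a - b| ≤ 2 * dmin / (d₂ * M))
    (S : Finset ℝ) (hS : ∀ x ∈ S, x ∈ I ∧ LinearMap.ker ((1 - U x : V →L[ℂ] V) : V →ₗ[ℂ] V) ≠ ⊥)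
    (φ : ℝ → V) (hφ : ∀ x ∈ S, φ x ∈ LinearMap.ker ((1 - U x : V →L[ℂ] V) : V →ₗ[ℂ] V))
    (hsum : ∑ x ∈ S, φ x = 0) :
    ∀ x ∈ S, φ x = 0 := by
  classical
  by_contra hcon
  push_neg at hcon
  obtain ⟨x₀, hx₀S, hx₀⟩ := hcon
  rcases eq_or_lt_of_le hM with hM1 | hM2
  · -- dimension 1 case
    have hdim1 : Module.finrank ℂ V = 1 := by rw [hdim, ← hM1]
    have huniq : ∀ p ∈ S, ∀ q ∈ S, p = q := by
      intro p hp q hq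
      by_contra hne
      -- common fixed vector
      obtain ⟨ψp, hψpker, hψp0⟩ := Submodule.ne_bot_iff _ |>.mp (hS p hp).2
      obtain ⟨ψq, hψqker, hψq0⟩ := Submodule.ne_bot_iff _ |>.mp (hS q hq).2
      have hspan : Submodule.span ℂ {ψq} = ⊤ :=
        Submodule.eq_top_of_finrank_eq (by rw [finrank_span_singleton hψq0, hdim1])
      have hmem : ψp ∈ Submodule.span ℂ ({ψq} : Set V) := by rw [hspan]; trivial
      obtain ⟨c, hc⟩ := Submodule.mem_span_singleton.mp hmem
      have hc0 : c ≠ 0 := by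
        intro h0; rw [h0, zero_smul] at hc; exact hψp0 hc.symm
      have hψpq : ψp ∈ LinearMap.ker ((1 - U q : V →L[ℂ] V) : V →ₗ[ℂ] V) := by
        rw [← hc]; exact Submodule.smul_mem _ c hψqker
      have hLpq : |p - q| ≤ 2 * dmin / d₂ := by
        have := hlen p (hS p hp).1 q (hS q hq).1
        rwa [← hM1, Nat.cast_one, mul_one] at this
      have hfp : U p ψp = ψp := fixed_of_ker _ _ hψpker
      have hfq : U q ψp = ψp := fixed_of_ker _ _ hψpq
      rcases lt_or_gt_of_ne hne with h | h
      · exact winding hdim1 U U' U'' hunit hU' hU'' D hD dmin d₂ hdmin hd₂ hlower hupper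
          p q h (by rw [abs_sub_comm] at hLpq; linarith [le_abs_self (q - p), hLpq]) ψp hψp0 hfp hfq
      · exact winding hdim1 U U' U'' hunit hU' hU'' D hD dmin d₂ hdmin hd₂ hlower hupper
          q p h (by linarith [le_abs_self (p - q), hLpq]) ψp hψp0 hfq hfp
    have hSsing : S = {x₀} := by
      apply Finset.eq_singleton_iff_unique_mem.mpr
      exact ⟨hx₀S, fun q hq => (huniq q hq x₀ hx₀S)⟩
    rw [hSsing, Finset.sum_singleton] at hsum
    exact hx₀ hsum
  · -- M ≥ 2
    have hMR : (2:ℝ) ≤ (M:ℝ) := by exact_mod_cast hM2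
    have hM0 : (0:ℝ) < (M:ℝ) := by linarith
    set Good : Finset ℝ → Prop := fun T => T.Nonempty ∧ (∀ p ∈ T, p ∈ I) ∧
      ∃ ψ : ℝ → V, (∀ p ∈ T, ψ p ∈ LinearMap.ker ((1 - U p : V →L[ℂ] V) : V →ₗ[ℂ] V)) ∧ (∀ p ∈ T, ψ p ≠ 0) ∧
        ∑ p ∈ T, ψ p = 0 with hGooddef
    have hex : ∃ n : ℕ, ∃ T : Finset ℝ, Good T ∧ T.card = n := by
      refine ⟨_, S.filter (fun p => φ p ≠ 0), ⟨⟨x₀, ?_⟩, ?_, φ, ?_, ?_, ?_⟩, rfl⟩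
      · exact Finset.mem_filter.mpr ⟨hx₀S, hx₀⟩
      · intro p hp; exact (hS p (Finset.mem_filter.mp hp).1).1
      · intro p hp; exact hφ p (Finset.mem_filter.mp hp).1
      · intro p hp; exact (Finset.mem_filter.mp hp).2
      · rw [Finset.sum_filter_ne_zero]; exact hsum
    obtain ⟨T, hT, hTcard⟩ := Nat.find_spec hex
    obtain ⟨hTne, hTI, ψ, hψker, hψ0, hψsum⟩ := hT
    have hψpos : ∀ p ∈ T, 0 < ‖ψ p‖ := fun p hp => norm_pos_iff.mpr (hψ0 p hp)
    -- cardinality bound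
    have hcard : T.card ≤ M + 1 := by
      by_contra hbig
      push_neg at hbig
      obtain ⟨T'', hsub, hcard''⟩ := Finset.exists_subset_card_eq (le_of_lt hbig)
      have hnli : ¬ LinearIndependent ℂ (fun p : {z // z ∈ T''} => ψ p.1) := by
        intro hli
        have h1 := hli.fintype_card_le_finrank
        rw [hdim, Fintype.card_coe, hcard''] at h1
        omega
      obtain ⟨g, hgsum, i, hgi⟩ := Fintype.not_linearIndependent_iff.mp hnli
      set ψ' : ℝ → V := fun p => if h : p ∈ T'' then g ⟨p, h⟩ • ψ p else 0 with hψ'def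
      set T₃ := T''.filter (fun p => ψ' p ≠ 0) with hT₃def
      have hψ'i : ψ' i.1 ≠ 0 := by
        rw [hψ'def]; simp only [i.2, dif_pos]
        exact smul_ne_zero hgi (hψ0 i.1 (hsub i.2))
      have hGood₃ : Good T₃ := by
        refine ⟨⟨i.1, Finset.mem_filter.mpr ⟨i.2, hψ'i⟩⟩, ?_, ψ', ?_, ?_, ?_⟩
        · intro p hp; exact hTI p (hsub (Finset.mem_filter.mp hp).1)
        · intro p hp
          have hp'' := (Finset.mem_filter.mp hp).1
          rw [hψ'def]; simp only [hp'', dif_pos]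
          exact Submodule.smul_mem _ _ (hψker p (hsub hp''))
        · intro p hp; exact (Finset.mem_filter.mp hp).2
        · rw [hT₃def, Finset.sum_filter_ne_zero]
          calc ∑ p ∈ T'', ψ' p = ∑ p ∈ T''.attach, ψ' p.1 := (Finset.sum_attach T'' ψ').symm
            _ = ∑ p ∈ T''.attach, g p • ψ p.1 := by
                apply Finset.sum_congr rfl
                intro j _
                rw [hψ'def]; simp only [j.2, dif_pos]
            _ = 0 := hgsum
      have hlt : T₃.card < Nat.find hex := by
        have h1 : T₃.card ≤ T''.card := Finset.card_le_card (Finset.filter_subset _ _)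
        rw [← hTcard]
        omega
      exact Nat.find_min hex hlt ⟨T₃, hGood₃, rfl⟩
    -- per-point estimate
    have hKEY : ∀ p ∈ T, dmin * ‖ψ p‖ ≤ d₂ / 2 * ∑ q ∈ T.erase p, |q - p| * ‖ψ q‖ := by
      intro p hp
      have hrep : ψ p = - ∑ q ∈ T.erase p, ψ q := by
        have h0 := Finset.add_sum_erase T ψ hp
        rw [hψsum] at h0
        exact eq_neg_of_add_eq_zero_left h0
      have h1 : dmin * ‖ψ p‖ ^ 2 ≤ (⟪(D p) (ψ p), ψ p⟫_ℂ).re := hlower p (ψ p)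
      have h2 : ⟪(D p) (ψ p), ψ p⟫_ℂ = - ∑ q ∈ T.erase p, ⟪(D p) (ψ p), ψ q⟫_ℂ := by
        nth_rewrite 2 [hrep]
        rw [inner_neg_right, inner_sum]
      have h3 : (⟪(D p) (ψ p), ψ p⟫_ℂ).re ≤ ∑ q ∈ T.erase p, ‖⟪(D p) (ψ p), ψ q⟫_ℂ‖ := by
        calc (⟪(D p) (ψ p), ψ p⟫_ℂ).re ≤ ‖⟪(D p) (ψ p), ψ p⟫_ℂ‖ := by
              exact Complex.re_le_norm _
          _ = ‖∑ q ∈ T.erase p, ⟪(D p) (ψ p), ψ q⟫_ℂ‖ := by rw [h2, norm_neg]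
          _ ≤ ∑ q ∈ T.erase p, ‖⟪(D p) (ψ p), ψ q⟫_ℂ‖ := norm_sum_le _ _
      have h4 : ∑ q ∈ T.erase p, ‖⟪(D p) (ψ p), ψ q⟫_ℂ‖
          ≤ ∑ q ∈ T.erase p, d₂ / 2 * (|q - p| * ‖ψ q‖) * ‖ψ p‖ := by
        apply Finset.sum_le_sum
        intro q hq
        have hqT := Finset.mem_erase.mp hq
        have hest := pair_est_D U U' U'' hunit hU' hU'' D hD d₂ hupper p q
          (Ne.symm hqT.1) (ψ p) (ψ q) (hψker p hp) (hψker q hqT.2)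
        calc ‖⟪(D p) (ψ p), ψ q⟫_ℂ‖ ≤ d₂ / 2 * |q - p| * (‖ψ p‖ * ‖ψ q‖) := hest
          _ = d₂ / 2 * (|q - p| * ‖ψ q‖) * ‖ψ p‖ := by ring
      have h5 : dmin * ‖ψ p‖ ^ 2 ≤ (d₂ / 2 * ∑ q ∈ T.erase p, |q - p| * ‖ψ q‖) * ‖ψ p‖ := by
        calc dmin * ‖ψ p‖ ^ 2 ≤ (⟪(D p) (ψ p), ψ p⟫_ℂ).re := h1
          _ ≤ ∑ q ∈ T.erase p, ‖⟪(D p) (ψ p), ψ q⟫_ℂ‖ := h3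
          _ ≤ ∑ q ∈ T.erase p, d₂ / 2 * (|q - p| * ‖ψ q‖) * ‖ψ p‖ := h4
          _ = (d₂ / 2 * ∑ q ∈ T.erase p, |q - p| * ‖ψ q‖) * ‖ψ p‖ := by
              rw [Finset.mul_sum, Finset.sum_mul]
      have hppos := hψpos p hp
      have h6 : dmin * ‖ψ p‖ * ‖ψ p‖ ≤ (d₂ / 2 * ∑ q ∈ T.erase p, |q - p| * ‖ψ q‖) * ‖ψ p‖ := by
        calc dmin * ‖ψ p‖ * ‖ψ p‖ = dmin * ‖ψ p‖ ^ 2 := by ring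
          _ ≤ _ := h5
      exact le_of_mul_le_mul_right h6 hppos
    -- weak bound: (M+1) ‖ψ p‖ ≤ s
    set s : ℝ := ∑ p ∈ T, ‖ψ p‖ with hsdef
    have hL : ∀ p ∈ T, ∀ q ∈ T, |q - p| ≤ 2 * dmin / (d₂ * M) := fun p hp q hq =>
      hlen q (hTI q hq) p (hTI p hp)
    have hconst : d₂ / 2 * (2 * dmin / (d₂ * M)) = dmin / M := by
      field_simp
    have hsum_bound : ∀ p ∈ T, ∑ q ∈ T.erase p, |q - p| * ‖ψ q‖
        ≤ 2 * dmin / (d₂ * M) * ∑ q ∈ T.erase p, ‖ψ q‖ := by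
      intro p hp
      rw [Finset.mul_sum]
      apply Finset.sum_le_sum
      intro q hq
      have hqT := (Finset.mem_erase.mp hq).2
      exact mul_le_mul_of_nonneg_right (hL p hp q hqT) (norm_nonneg _)
    have h7 : ∀ p ∈ T, d₂ / 2 * ∑ q ∈ T.erase p, |q - p| * ‖ψ q‖
        ≤ dmin / M * ∑ q ∈ T.erase p, ‖ψ q‖ := by
      intro p hp
      rw [← hconst, mul_assoc]
      apply mul_le_mul_of_nonneg_left _ (by positivity : (0:ℝ) ≤ d₂ / 2)
      exact hsum_bound p hp
    have hQ : ∀ p ∈ T, ((M:ℝ) + 1) * ‖ψ p‖ ≤ s := by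
      intro p hp
      have h8 : dmin * ‖ψ p‖ ≤ dmin / M * (s - ‖ψ p‖) := by
        calc dmin * ‖ψ p‖ ≤ d₂ / 2 * ∑ q ∈ T.erase p, |q - p| * ‖ψ q‖ := hKEY p hp
          _ ≤ dmin / M * ∑ q ∈ T.erase p, ‖ψ q‖ := h7 p hp
          _ = dmin / M * (s - ‖ψ p‖) := by rw [hsdef, Finset.sum_erase_eq_sub hp]
      have h10 := mul_le_mul_of_nonneg_left h8 hM0.le
      have h11 : (M:ℝ) * (dmin / M * (s - ‖ψ p‖)) = dmin * (s - ‖ψ p‖) := by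
        field_simp
      rw [h11] at h10
      nlinarith [h10, hdmin]
    -- case analysis on |T|
    rcases Nat.lt_or_ge T.card 3 with hsmall | hbig3
    · -- card 1 or 2
      interval_cases hc : T.card
      · exact absurd hc (Finset.card_ne_zero_of_mem (hTne.choose_spec))
      · obtain ⟨p, hTp⟩ := Finset.card_eq_one.mp hc
        have hpT : p ∈ T := by rw [hTp]; exact Finset.mem_singleton_self p
        have : ψ p = 0 := by
          have := hψsum
          rw [hTp, Finset.sum_singleton] at this
          exact this
        exact hψ0 p hpT this
      · obtain ⟨p, q, hpq, hTpq⟩ := Finset.card_eq_two.mp hc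
        have hpT : p ∈ T := by rw [hTpq]; simp
        have hqT : q ∈ T := by rw [hTpq]; simp
        have hsval : s = ‖ψ p‖ + ‖ψ q‖ := by
          rw [hsdef, hTpq, Finset.sum_pair hpq]
        have hQp := hQ p hpT
        have hQq := hQ q hqT
        have hppos := hψpos p hpT
        have hqpos := hψpos q hqT
        rw [hsval] at hQp hQq
        nlinarith [hQp, hQq, hppos, hqpos, hMR]
    · -- card ≥ 3 : strict inequality at the max
      have hTne' := hTne
      set pmax := T.max' hTne with hpmaxdef
      set pmin := T.min' hTne with hpmindef
      have hmaxT : pmax ∈ T := T.max'_mem hTne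
      have hminT : pmin ∈ T := T.min'_mem hTne
      -- a middle element
      have hmid : ∃ r ∈ T, r ≠ pmax ∧ r ≠ pmin := by
        have h1 : ((T.erase pmax).erase pmin).Nonempty := by
          rw [← Finset.card_pos]
          have h2 := Finset.card_erase_le (a := pmin) (s := T.erase pmax)
          have h3 : (T.erase pmax).card = T.card - 1 := Finset.card_erase_of_mem hmaxT
          have h4 : (T.erase pmax).card - 1 ≤ ((T.erase pmax).erase pmin).card :=
            Finset.pred_card_le_card_erase
          omega
        obtain ⟨r, hr⟩ := h1
        have hr1 := Finset.mem_erase.mp hr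
        have hr2 := Finset.mem_erase.mp hr1.2
        exact ⟨r, hr2.2, hr2.1, hr1.1⟩
      obtain ⟨r, hrT, hrmax, hrmin⟩ := hmid
      have hrlt : pmax - r < pmax - pmin := by
        have h1 : pmin ≤ r := T.min'_le r hrT
        have h2 : pmin < r := lt_of_le_of_ne h1 (Ne.symm hrmin)
        linarith
      have hrle : r ≤ pmax := T.le_max' r hrT
      have hminmax : |pmin - pmax| ≤ 2 * dmin / (d₂ * M) := hL pmax hmaxT pmin hminT
      have habs : |r - pmax| < 2 * dmin / (d₂ * M) := by
        rw [abs_sub_comm, abs_of_nonneg (by linarith : (0:ℝ) ≤ pmax - r)]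
        have : |pmin - pmax| = pmax - pmin := by
          rw [abs_sub_comm, abs_of_nonneg (by linarith [T.min'_le pmax hmaxT] : (0:ℝ) ≤ pmax - pmin)]
        rw [this] at hminmax
        linarith
      -- strict sum bound at pmax
      have hstrict : ∑ q ∈ T.erase pmax, |q - pmax| * ‖ψ q‖
          < 2 * dmin / (d₂ * M) * ∑ q ∈ T.erase pmax, ‖ψ q‖ := by
        rw [Finset.mul_sum]
        apply Finset.sum_lt_sum
        · intro q hq
          exact mul_le_mul_of_nonneg_right (hL pmax hmaxT q (Finset.mem_erase.mp hq).2)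
            (norm_nonneg _)
        · refine ⟨r, Finset.mem_erase.mpr ⟨hrmax, hrT⟩, ?_⟩
          exact mul_lt_mul_of_pos_right habs (hψpos r hrT)
      have hQmax : ((M:ℝ) + 1) * ‖ψ pmax‖ < s := by
        have h8 : dmin * ‖ψ pmax‖ < dmin / M * (s - ‖ψ pmax‖) := by
          calc dmin * ‖ψ pmax‖ ≤ d₂ / 2 * ∑ q ∈ T.erase pmax, |q - pmax| * ‖ψ q‖ :=
                hKEY pmax hmaxT
            _ < d₂ / 2 * (2 * dmin / (d₂ * M) * ∑ q ∈ T.erase pmax, ‖ψ q‖) := by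
                apply mul_lt_mul_of_pos_left hstrict (by positivity)
            _ = dmin / M * ∑ q ∈ T.erase pmax, ‖ψ q‖ := by rw [← mul_assoc, hconst]
            _ = dmin / M * (s - ‖ψ pmax‖) := by rw [hsdef, Finset.sum_erase_eq_sub hmaxT]
        have h10 := mul_lt_mul_of_pos_left h8 hM0
        have h11 : (M:ℝ) * (dmin / M * (s - ‖ψ pmax‖)) = dmin * (s - ‖ψ pmax‖) := by
          field_simp
        rw [h11] at h10
        nlinarith [h10, hdmin]
      -- sum up
      have hsum_lt : ∑ p ∈ T, ((M:ℝ) + 1) * ‖ψ p‖ < ∑ p ∈ T, s :=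
        Finset.sum_lt_sum (fun p hp => hQ p hp) ⟨pmax, hmaxT, hQmax⟩
      have hlhs : ∑ p ∈ T, ((M:ℝ) + 1) * ‖ψ p‖ = ((M:ℝ) + 1) * s := by
        rw [hsdef, Finset.mul_sum]
      have hrhs : ∑ p ∈ T, s = T.card * s := by
        rw [Finset.sum_const, nsmul_eq_mul]
      have hspos : 0 ≤ s := Finset.sum_nonneg (fun p _ => norm_nonneg _)
      have hcardR : (T.card : ℝ) ≤ (M:ℝ) + 1 := by exact_mod_cast hcard
      rw [hlhs, hrhs] at hsum_lt
      nlinarith [hsum_lt, hspos, hcardR]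
end

section
/- Let U be a twice continuously differentiable family of unitary operators on a finite-dimensional complex inner product space V with ‖U''(t)‖ ≤ d₂ for all t, and set D(x) := (1/i) U'(x) U(x)^{-1}. If φ ∈ ker(I − U(x)), ψ ∈ ker(I − U(y)) and x ≠ y, then |⟨D(x)φ, ψ⟩| ≤ (d₂/2)·|x − y|·‖φ‖·‖ψ‖. -/
open scoped InnerProductSpace

/-- **Lemma (almost orthogonality).** If `U` is a twice continuously differentiable
family of unitary operators with `‖U''(t)‖ ≤ d₂` and `D(x) = (1/i) U'(x) U(x)⁻¹`,
then for `φ ∈ ker(I - U(x))`, `ψ ∈ ker(I - U(y))`, `x ≠ y` one has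
`|⟨D(x)φ, ψ⟩| ≤ (d₂/2)·|x - y|·‖φ‖·‖ψ‖`. -/
theorem monotone_unitary_almost_orthogonal
    {V : Type*} [NormedAddCommGroup V] [InnerProductSpace ℂ V] [FiniteDimensional ℂ V]
    (U U' U'' : ℝ → (V →L[ℂ] V)) (d₂ : ℝ)
    (hunit : ∀ x, U x ∈ unitary (V →L[ℂ] V))
    (hU' : ∀ x, HasDerivAt U (U' x) x)
    (hU'' : ∀ x, HasDerivAt U' (U'' x) x)
    (hU''cont : Continuous U'')
    (hd₂ : ∀ t, ‖U'' t‖ ≤ d₂)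
    (D : ℝ → (V →L[ℂ] V))
    (hD : ∀ x, D x = Complex.I⁻¹ • (U' x ∘L star (U x)))
    (x y : ℝ) (hxy : x ≠ y) (φ ψ : V)
    (hφ : φ ∈ LinearMap.ker ((1 - U x : V →L[ℂ] V) : V →ₗ[ℂ] V)) (hψ : ψ ∈ LinearMap.ker ((1 - U y : V →L[ℂ] V) : V →ₗ[ℂ] V)) :
    ‖⟪D x φ, ψ⟫_ℂ‖ ≤ d₂ / 2 * |x - y| * ‖φ‖ * ‖ψ‖ := by
  -- fixed-point facts
  have hUxφ : U x φ = φ := by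
    have h : (1 - U x) φ = 0 := LinearMap.mem_ker.mp hφ
    have h2 : φ - U x φ = 0 := by
      simpa [ContinuousLinearMap.sub_apply] using h
    exact (sub_eq_zero.mp h2).symm
  have hUyψ : U y ψ = ψ := by
    have h : (1 - U y) ψ = 0 := LinearMap.mem_ker.mp hψ
    have h2 : ψ - U y ψ = 0 := by
      simpa [ContinuousLinearMap.sub_apply] using h
    exact (sub_eq_zero.mp h2).symm
  have hstarφ : star (U x) φ = φ := by
    have h1 : star (U x) * U x = 1 := (hunit x).1
    calc star (U x) φ = star (U x) (U x φ) := by rw [hUxφ]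
    _ = (star (U x) * U x) φ := rfl
    _ = φ := by rw [h1]; rfl
  have hstaryψ : star (U y) ψ = ψ := by
    have h1 : star (U y) * U y = 1 := (hunit y).1
    calc star (U y) ψ = star (U y) (U y ψ) := by rw [hUyψ]
    _ = (star (U y) * U y) ψ := rfl
    _ = ψ := by rw [h1]; rfl
  set g : ℝ → ℂ := fun t => ⟪ψ, U t φ⟫_ℂ with hgdef
  have hgx : g x = ⟪ψ, φ⟫_ℂ := by simp only [hgdef, hUxφ]
  have hgy : g y = ⟪ψ, φ⟫_ℂ := by
    have : ⟪ψ, U y φ⟫_ℂ = ⟪star (U y) ψ, φ⟫_ℂ := by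
      rw [ContinuousLinearMap.star_eq_adjoint, ContinuousLinearMap.adjoint_inner_left]
    simpa [hgdef, hstaryψ] using this
  -- derivatives of g
  have hEval : ∀ (A A' : ℝ → (V →L[ℂ] V)), (∀ t, HasDerivAt A (A' t) t) →
      ∀ t, HasDerivAt (fun s => ⟪ψ, A s φ⟫_ℂ) (⟪ψ, A' t φ⟫_ℂ) t := by
    intro A A' hA t
    have h1 : HasDerivAt (fun s => A s φ) (A' t φ) t := by
      have := (((ContinuousLinearMap.apply ℂ V φ).restrictScalars ℝ).hasFDerivAt
        (x := A t)).comp_hasDerivAt t (hA t)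
      exact this
    have h2 := (((innerSL ℂ ψ).restrictScalars ℝ).hasFDerivAt (x := A t φ)).comp_hasDerivAt t h1
    exact h2
  have hg' : ∀ t, HasDerivAt g (⟪ψ, U' t φ⟫_ℂ) t := hEval U U' hU'
  have hg'' : ∀ t, HasDerivAt (fun t => ⟪ψ, U' t φ⟫_ℂ) (⟪ψ, U'' t φ⟫_ℂ) t :=
    hEval U' U'' hU''
  -- Taylor with integral remainder
  set G : ℝ → ℂ := fun t => g t + ((y : ℂ) - t) * ⟪ψ, U' t φ⟫_ℂ with hGdef
  have hG : ∀ t, HasDerivAt G (((y : ℂ) - t) * ⟪ψ, U'' t φ⟫_ℂ) t := by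
    intro t
    have hlin : HasDerivAt (fun s : ℝ => ((y : ℂ) - s)) (-1) t := by
      simpa using (Complex.ofRealCLM.hasDerivAt (x := t)).const_sub (y : ℂ)
    have := (hg' t).add ((hlin.mul (hg'' t)))
    exact this.congr_deriv (by ring)
  have hcont : Continuous fun t => ((y : ℂ) - t) * ⟪ψ, U'' t φ⟫_ℂ := by
    have c1 : Continuous fun t : ℝ => U'' t φ :=
      (ContinuousLinearMap.apply ℂ V φ).continuous.comp hU''cont
    have c2 : Continuous fun t : ℝ => ⟪ψ, U'' t φ⟫_ℂ := (innerSL ℂ ψ).continuous.comp c1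
    exact (Continuous.sub continuous_const Complex.continuous_ofReal).mul c2
  have hint : IntervalIntegrable (fun t => ((y : ℂ) - t) * ⟪ψ, U'' t φ⟫_ℂ)
      MeasureTheory.volume x y := hcont.intervalIntegrable x y
  have key : (∫ t in x..y, ((y : ℂ) - t) * ⟪ψ, U'' t φ⟫_ℂ) = G y - G x :=
    intervalIntegral.integral_eq_sub_of_hasDerivAt (fun t _ => hG t) hint
  have hGyGx : G y - G x = -(((y : ℂ) - x) * ⟪ψ, U' x φ⟫_ℂ) := by
    simp only [hGdef, hgy, hgx]
    ring
  -- norm bound on the integral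
  set C : ℝ := d₂ * ‖φ‖ * ‖ψ‖ with hCdef
  have hC0 : 0 ≤ d₂ := le_trans (norm_nonneg _) (hd₂ 0)
  have hbound : ‖∫ t in x..y, ((y : ℂ) - t) * ⟪ψ, U'' t φ⟫_ℂ‖
      ≤ |∫ t in x..y, C * abs (y - t)| := by
    apply intervalIntegral.norm_integral_le_abs_of_norm_le
    · refine MeasureTheory.ae_of_all _ fun t => ?_
      have h1 : ‖((y : ℂ) - t) * ⟪ψ, U'' t φ⟫_ℂ‖ = |y - t| * ‖⟪ψ, U'' t φ⟫_ℂ‖ := by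
        rw [norm_mul]
        congr 1
        rw [← Complex.ofReal_sub]
        exact (Complex.norm_real _).trans (Real.norm_eq_abs _)
      rw [h1]
      have h2 : ‖⟪ψ, U'' t φ⟫_ℂ‖ ≤ ‖ψ‖ * (‖U'' t‖ * ‖φ‖) :=
        le_trans (norm_inner_le_norm _ _)
          (by gcongr; exact (U'' t).le_opNorm φ)
      calc |y - t| * ‖⟪ψ, U'' t φ⟫_ℂ‖ ≤ |y - t| * (‖ψ‖ * (‖U'' t‖ * ‖φ‖)) := by
            gcongr
      _ ≤ |y - t| * (‖ψ‖ * (d₂ * ‖φ‖)) := by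
            gcongr
            exact hd₂ t
      _ = C * |y - t| := by rw [hCdef]; ring
    · exact ((continuous_const.mul
        ((continuous_const.sub continuous_id).abs)).intervalIntegrable x y)
  have hintval : (∫ t in x..y, C * abs (y - t)) = C * ((y - x) * |y - x|) / 2 := by
    rcases le_total x y with hle | hle
    · have : (∫ t in x..y, C * abs (y - t)) = ∫ t in x..y, C * (y - t) := by
        apply intervalIntegral.integral_congr
        intro t ht
        rw [Set.uIcc_of_le hle] at ht
        show C * |y - t| = C * (y - t)
        rw [abs_of_nonneg (by linarith [ht.2])]
      rw [this]
      rw [intervalIntegral.integral_const_mul]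
      have : (∫ t in x..y, (y - t)) = (∫ t in x..y, (y : ℝ)) - ∫ t in x..y, t := by
        rw [← intervalIntegral.integral_sub (intervalIntegrable_const)
          (intervalIntegral.intervalIntegrable_id)]
      rw [this, intervalIntegral.integral_const, integral_id, smul_eq_mul,
        abs_of_nonneg (by linarith : (0:ℝ) ≤ y - x)]
      ring
    · have : (∫ t in x..y, C * abs (y - t)) = ∫ t in x..y, C * (t - y) := by
        apply intervalIntegral.integral_congr
        intro t ht
        rw [Set.uIcc_of_ge hle] at ht
        show C * |y - t| = C * (t - y)
        rw [abs_of_nonpos (by linarith [ht.1]), neg_sub]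
      rw [this]
      rw [intervalIntegral.integral_const_mul]
      have : (∫ t in x..y, (t - y)) = (∫ t in x..y, t) - ∫ t in x..y, (y : ℝ) := by
        rw [← intervalIntegral.integral_sub
          (intervalIntegral.intervalIntegrable_id) (intervalIntegrable_const)]
      rw [this, intervalIntegral.integral_const, integral_id, smul_eq_mul,
        abs_of_nonpos (by linarith : y - x ≤ 0)]
      ring
  -- combine
  have hmain : |y - x| * ‖⟪ψ, U' x φ⟫_ℂ‖ ≤ C * (y - x) ^ 2 / 2 := by
    have h1 : ‖-(((y : ℂ) - x) * ⟪ψ, U' x φ⟫_ℂ)‖ ≤ |C * ((y - x) * |y - x|) / 2| := by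
      rw [← hGyGx, ← key, ← hintval]
      exact hbound
    have h2 : ‖-(((y : ℂ) - x) * ⟪ψ, U' x φ⟫_ℂ)‖ = |y - x| * ‖⟪ψ, U' x φ⟫_ℂ‖ := by
      rw [norm_neg, norm_mul]
      congr 1
      rw [← Complex.ofReal_sub]
      exact (Complex.norm_real _).trans (Real.norm_eq_abs _)
    have h3 : |C * ((y - x) * |y - x|) / 2| = C * (y - x) ^ 2 / 2 := by
      have hCnn : 0 ≤ C := by
        rw [hCdef]; positivity
      have e1 : abs ((y - x) * abs (y - x)) = (y - x) ^ 2 := by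
        rw [abs_mul, abs_abs, sq, ← abs_mul_abs_self (y - x)]
      calc abs (C * ((y - x) * abs (y - x)) / 2)
          = abs C * abs ((y - x) * abs (y - x)) / abs 2 := by
            rw [abs_div, abs_mul]
      _ = C * (y - x) ^ 2 / 2 := by
            rw [e1, abs_of_nonneg hCnn, abs_of_nonneg (by norm_num : (0:ℝ) ≤ 2)]
    rw [← h2, ← h3]
    exact h1
  -- rewrite the target in terms of ⟪ψ, U' x φ⟫
  have hDφ : D x φ = Complex.I⁻¹ • U' x φ := by
    rw [hD]
    simp [ContinuousLinearMap.smul_apply, ContinuousLinearMap.comp_apply, hstarφ]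
  have htarget : ‖⟪D x φ, ψ⟫_ℂ‖ = ‖⟪ψ, U' x φ⟫_ℂ‖ := by
    rw [← norm_inner_symm, hDφ, inner_smul_right, norm_mul]
    simp [Complex.norm_I]
  rw [htarget]
  have hyx : 0 < |y - x| := abs_pos.mpr (sub_ne_zero.mpr (Ne.symm hxy))
  have h4 : C * (y - x) ^ 2 / 2 = (C * |y - x| / 2) * |y - x| := by
    rw [sq, ← abs_mul_abs_self (y - x)]; ring
  rw [h4] at hmain
  have h5 : ‖⟪ψ, U' x φ⟫_ℂ‖ ≤ C * |y - x| / 2 := by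
    have := le_of_mul_le_mul_right (by linarith [hmain] : ‖⟪ψ, U' x φ⟫_ℂ‖ * |y - x| ≤ (C * |y - x| / 2) * |y - x|) hyx
    exact this
  calc ‖⟪ψ, U' x φ⟫_ℂ‖ ≤ C * |y - x| / 2 := h5
  _ = d₂ / 2 * |x - y| * ‖φ‖ * ‖ψ‖ := by
      rw [hCdef, abs_sub_comm]
      ring
end

section
/- Let x ↦ A(x) be a continuously differentiable family of self-adjoint operators on a finite-dimensional complex inner product space V, and set U(x) = e^{iA(x)}. Then for every x, (1/i) U'(x) U(x)^{-1} = ∫_0^1 e^{iτA(x)} A'(x) e^{−iτA(x)} dτ. -/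
set_option maxHeartbeats 1000000
set_option synthInstance.maxHeartbeats 400000

open NormedSpace MeasureTheory Filter Topology intervalIntegral

noncomputable instance myRatNormedAlgebra {𝔸 : Type*} [NormedRing 𝔸] [NormedAlgebra ℂ 𝔸] :
    NormedAlgebra ℚ 𝔸 :=
  NormedAlgebra.restrictScalars ℚ ℂ 𝔸

section DuhamelAux

variable {𝔸 : Type*} [NormedRing 𝔸] [NormedAlgebra ℂ 𝔸] [CompleteSpace 𝔸]

private lemma my_hasDerivAt_exp_rsmul (P : 𝔸) (τ : ℝ) :
    HasDerivAt (fun t : ℝ => exp (t • P)) (exp (τ • P) * P) τ := by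
  have h := hasDerivAt_exp_smul_const (𝕂 := ℝ) P τ
  exact h

private lemma my_cont_exp_rsmul (P : 𝔸) : Continuous fun τ : ℝ => exp (τ • P) :=
  exp_continuous.comp (continuous_id.smul continuous_const)

private lemma my_duhamel (P Q : 𝔸) :
    exp P - exp Q =
      ∫ τ in (0:ℝ)..1, exp (τ • P) * (P - Q) * exp ((1 - τ) • Q) := by
  have key : ∀ τ : ℝ,
      HasDerivAt (fun t : ℝ => exp (t • P) * (exp Q * exp (-(t • Q))))
        (exp (τ • P) * (P - Q) * exp ((1 - τ) • Q)) τ := by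
    intro τ
    have h1 := my_hasDerivAt_exp_rsmul P τ
    have h2 : HasDerivAt (fun t : ℝ => exp (-(t • Q))) (exp (-(τ • Q)) * (-Q)) τ := by
      simpa [smul_neg] using my_hasDerivAt_exp_rsmul (-Q) τ
    have h3 := h1.mul (h2.const_mul (exp Q))
    have hE : exp Q * exp (-(τ • Q)) = exp ((1 - τ) • Q) := by
      rw [← exp_add_of_commute (((Commute.refl Q).smul_right τ).neg_right)]
      congr 1
      rw [sub_smul, one_smul, sub_eq_add_neg]
    have hQE : exp ((1 - τ) • Q) * Q = Q * exp ((1 - τ) • Q) :=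
      (((Commute.refl Q).smul_left (1 - τ)).exp_left).eq
    convert h3 using 1
    · rfl
    have h4 : exp Q * (exp (-(τ • Q)) * -Q) = -(Q * exp ((1 - τ) • Q)) := by
      rw [← mul_assoc, hE, mul_neg, hQE]
    rw [h4, hE]
    noncomm_ring
  have cont : Continuous fun τ : ℝ =>
      exp (τ • P) * (P - Q) * exp ((1 - τ) • Q) := by
    refine Continuous.mul ?_ ?_
    · exact (my_cont_exp_rsmul P).mul continuous_const
    · exact exp_continuous.comp ((continuous_const.sub continuous_id).smul
        continuous_const)
  have hQQ : exp Q * exp (-Q) = 1 := by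
    rw [← exp_add_of_commute (Commute.refl Q).neg_right, add_neg_cancel, exp_zero]
  have hFTC := intervalIntegral.integral_eq_sub_of_hasDerivAt
    (f := fun t : ℝ => exp (t • P) * (exp Q * exp (-(t • Q))))
    (fun τ _ => key τ) (cont.intervalIntegrable 0 1)
  rw [hFTC]
  simp [hQQ]

end DuhamelAux

/-- **Proposition.** If `A(x)` is a `C¹` family of self-adjoint operators and
`U(x) = e^{iA(x)}`, then `(1/i)U'(x)U(x)⁻¹ = ∫_0^1 e^{iτA(x)} A'(x) e^{−iτA(x)} dτ`. -/
theorem deriv_exp_selfadjoint_family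
    {V : Type*} [NormedAddCommGroup V] [InnerProductSpace ℂ V] [FiniteDimensional ℂ V]
    (A A' : ℝ → (V →L[ℂ] V))
    (hsa : ∀ x, IsSelfAdjoint (A x))
    (hA' : ∀ x, HasDerivAt A (A' x) x)
    (hA'cont : Continuous A')
    (U : ℝ → (V →L[ℂ] V))
    (hU : ∀ x, U x = NormedSpace.exp (Complex.I • A x))
    (x : ℝ) :
    Complex.I⁻¹ • (deriv U x ∘L NormedSpace.exp (-(Complex.I • A x))) =
      ∫ τ in (0:ℝ)..1,
        NormedSpace.exp (((τ : ℂ) * Complex.I) • A x) ∘L A' x ∘L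
          NormedSpace.exp (-(((τ : ℂ) * Complex.I) • A x)) := by
  have hBd : HasDerivAt (fun y => Complex.I • A y) (Complex.I • A' x) x :=
    (hA' x).const_smul Complex.I
  have hAcont : Continuous A := continuous_iff_continuousAt.mpr fun y => (hA' y).continuousAt
  have hBcont : Continuous (fun y => Complex.I • A y) := hAcont.const_smul Complex.I
  set L : V →L[ℂ] V := ∫ τ in (0:ℝ)..1,
      exp (τ • (Complex.I • A x)) * (Complex.I • A' x) *
        exp ((1 - τ) • (Complex.I • A x)) with hL
  -- the limiting integrand is continuous
  have cont : Continuous fun τ : ℝ =>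
      exp (τ • (Complex.I • A x)) * (Complex.I • A' x) *
        exp ((1 - τ) • (Complex.I • A x)) := by
    refine Continuous.mul ?_ ?_
    · exact (my_cont_exp_rsmul (Complex.I • A x)).mul continuous_const
    · exact exp_continuous.comp ((continuous_const.sub continuous_id).smul
        continuous_const)
  -- slope representation via Duhamel
  have hslope : ∀ y, slope U x y =
      ∫ τ in (0:ℝ)..1, exp (τ • (Complex.I • A y)) *
        ((y - x)⁻¹ • (Complex.I • A y - Complex.I • A x)) *
        exp ((1 - τ) • (Complex.I • A x)) := by
    intro y
    rw [slope_def_module, hU y, hU x, my_duhamel (Complex.I • A y) (Complex.I • A x),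
      ← intervalIntegral.integral_smul]
    congr 1
    funext τ
    rw [mul_smul_comm, smul_mul_assoc]
  -- dominated convergence ingredients
  have c2 : Continuous fun p : ℝ × ℝ => exp (p.2 • (Complex.I • A p.1)) :=
    exp_continuous.comp (continuous_snd.smul (hBcont.comp continuous_fst))
  obtain ⟨M₁, hM₁⟩ := ((isCompact_Icc (a := x - 1) (b := x + 1)).prod
    (isCompact_Icc (a := (0:ℝ)) (b := 1))).exists_bound_of_continuousOn c2.continuousOn
  have hM₁0 : 0 ≤ M₁ := le_trans (norm_nonneg _)
    (hM₁ (x, 0) ⟨⟨by linarith, by linarith⟩, ⟨le_refl _, zero_le_one⟩⟩)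
  have c3 : Continuous fun τ : ℝ => exp ((1 - τ) • (Complex.I • A x)) :=
    exp_continuous.comp ((continuous_const.sub continuous_id).smul continuous_const)
  obtain ⟨M₂, hM₂⟩ := (isCompact_Icc (a := (0:ℝ)) (b := 1)).exists_bound_of_continuousOn
    c3.continuousOn
  have hsl : Tendsto (fun y => (y - x)⁻¹ • (Complex.I • A y - Complex.I • A x)) (𝓝[≠] x)
      (𝓝 (Complex.I • A' x)) :=
    (hasDerivAt_iff_tendsto_slope.mp hBd).congr fun y => slope_def_module _ _ _
  have hsl_bdd : ∀ᶠ y in 𝓝[≠] x,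
      ‖(y - x)⁻¹ • (Complex.I • A y - Complex.I • A x)‖ ≤ ‖Complex.I • A' x‖ + 1 :=
    (hsl.norm.eventually_lt_const (lt_add_one ‖Complex.I • A' x‖)).mono fun y hy => le_of_lt hy
  have hmemIcc : ∀ᶠ y in 𝓝[≠] x, y ∈ Set.Icc (x - 1) (x + 1) :=
    eventually_nhdsWithin_of_eventually_nhds
      (Filter.eventually_mem_set.mpr (Icc_mem_nhds (by linarith) (by linarith)))
  have hτIcc : ∀ τ : ℝ, τ ∈ Set.uIoc (0:ℝ) 1 → τ ∈ Set.Icc (0:ℝ) 1 := by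
    intro τ hτ
    rw [Set.uIoc_of_le zero_le_one] at hτ
    exact Set.Ioc_subset_Icc_self hτ
  have h_meas : ∀ᶠ y in 𝓝[≠] x, AEStronglyMeasurable (fun τ : ℝ =>
      exp (τ • (Complex.I • A y)) *
        ((y - x)⁻¹ • (Complex.I • A y - Complex.I • A x)) *
        exp ((1 - τ) • (Complex.I • A x)))
      (volume.restrict (Set.uIoc (0:ℝ) 1)) := by
    refine Eventually.of_forall fun y => Continuous.aestronglyMeasurable ?_
    exact ((my_cont_exp_rsmul _).mul continuous_const).mul c3
  have h_bound : ∀ᶠ y in 𝓝[≠] x, ∀ᵐ τ ∂(volume : Measure ℝ), τ ∈ Set.uIoc (0:ℝ) 1 →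
      ‖exp (τ • (Complex.I • A y)) *
        ((y - x)⁻¹ • (Complex.I • A y - Complex.I • A x)) *
        exp ((1 - τ) • (Complex.I • A x))‖ ≤ M₁ * (‖Complex.I • A' x‖ + 1) * M₂ := by
    filter_upwards [hsl_bdd, hmemIcc] with y hy hmem
    refine Eventually.of_forall fun τ hτ => ?_
    have hτ' := hτIcc τ hτ
    have b1 : ‖exp (τ • (Complex.I • A y))‖ ≤ M₁ := hM₁ (y, τ) ⟨hmem, hτ'⟩
    have b3 : ‖exp ((1 - τ) • (Complex.I • A x))‖ ≤ M₂ := hM₂ τ hτ'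
    have h0 : (0:ℝ) ≤ ‖Complex.I • A' x‖ + 1 :=
      le_trans (norm_nonneg _) (le_add_of_nonneg_right zero_le_one)
    calc ‖exp (τ • (Complex.I • A y)) *
          ((y - x)⁻¹ • (Complex.I • A y - Complex.I • A x)) *
          exp ((1 - τ) • (Complex.I • A x))‖
        ≤ ‖exp (τ • (Complex.I • A y)) *
          ((y - x)⁻¹ • (Complex.I • A y - Complex.I • A x))‖ *
          ‖exp ((1 - τ) • (Complex.I • A x))‖ := norm_mul_le _ _
      _ ≤ (‖exp (τ • (Complex.I • A y))‖ *
          ‖(y - x)⁻¹ • (Complex.I • A y - Complex.I • A x)‖) *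
          ‖exp ((1 - τ) • (Complex.I • A x))‖ := by
            gcongr
            exact norm_mul_le _ _
      _ ≤ M₁ * (‖Complex.I • A' x‖ + 1) * M₂ :=
          mul_le_mul (mul_le_mul b1 hy (norm_nonneg _) hM₁0) b3 (norm_nonneg _)
            (mul_nonneg hM₁0 h0)
  have h_lim : ∀ᵐ τ ∂(volume : Measure ℝ), τ ∈ Set.uIoc (0:ℝ) 1 →
      Tendsto (fun y => exp (τ • (Complex.I • A y)) *
        ((y - x)⁻¹ • (Complex.I • A y - Complex.I • A x)) *
        exp ((1 - τ) • (Complex.I • A x))) (𝓝[≠] x)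
        (𝓝 (exp (τ • (Complex.I • A x)) * (Complex.I • A' x) *
          exp ((1 - τ) • (Complex.I • A x)))) := by
    refine Eventually.of_forall fun τ _ => ?_
    have t1 : Tendsto (fun y => exp (τ • (Complex.I • A y))) (𝓝[≠] x)
        (𝓝 (exp (τ • (Complex.I • A x)))) :=
      ((exp_continuous.comp
        (hBcont.const_smul τ)).continuousAt).tendsto.mono_left nhdsWithin_le_nhds
    exact (t1.mul hsl).mul tendsto_const_nhds
  have key := intervalIntegral.tendsto_integral_filter_of_dominated_convergence
    (fun _ => M₁ * (‖Complex.I • A' x‖ + 1) * M₂) h_meas h_bound intervalIntegrable_const h_lim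
  have hmain : Tendsto (slope U x) (𝓝[≠] x) (𝓝 L) := by
    rw [hL]
    exact key.congr fun y => (hslope y).symm
  have hU' : HasDerivAt U L x := hasDerivAt_iff_tendsto_slope.mpr hmain
  rw [hU'.deriv]
  -- now the algebraic rearrangement
  have hInt : IntervalIntegrable (fun τ : ℝ =>
      exp (τ • (Complex.I • A x)) * (Complex.I • A' x) *
        exp ((1 - τ) • (Complex.I • A x))) volume 0 1 := cont.intervalIntegrable 0 1
  have hR : L ∘L exp (-(Complex.I • A x)) = ∫ τ in (0:ℝ)..1,
      exp (τ • (Complex.I • A x)) * (Complex.I • A' x) *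
        exp ((1 - τ) • (Complex.I • A x)) * exp (-(Complex.I • A x)) := by
    have h := ((ContinuousLinearMap.mul ℂ (V →L[ℂ] V)).flip
      (exp (-(Complex.I • A x)))).intervalIntegral_comp_comm hInt
    rw [hL, ← ContinuousLinearMap.mul_def]
    simp only [ContinuousLinearMap.flip_apply, ContinuousLinearMap.mul_apply'] at h
    exact h.symm
  rw [hR, ← intervalIntegral.integral_smul]
  congr 1
  funext τ
  have e1 : τ • (Complex.I • A x) = ((τ : ℂ) * Complex.I) • A x := by
    rw [← Complex.coe_smul, smul_smul]
  have e2 : exp ((1 - τ) • (Complex.I • A x)) * exp (-(Complex.I • A x)) =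
      exp (-(τ • (Complex.I • A x))) := by
    rw [← exp_add_of_commute (((Commute.refl (Complex.I • A x)).smul_left (1 - τ)).neg_right)]
    congr 1
    rw [sub_smul, one_smul]
    abel
  calc Complex.I⁻¹ • (exp (τ • (Complex.I • A x)) * (Complex.I • A' x) *
        exp ((1 - τ) • (Complex.I • A x)) * exp (-(Complex.I • A x)))
      = Complex.I⁻¹ • (exp (τ • (Complex.I • A x)) * (Complex.I • A' x) *
        (exp ((1 - τ) • (Complex.I • A x)) * exp (-(Complex.I • A x)))) := by
        rw [mul_assoc]
    _ = Complex.I⁻¹ • (Complex.I • (exp (τ • (Complex.I • A x)) * A' x *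
        exp (-(τ • (Complex.I • A x))))) := by
        rw [e2, mul_smul_comm, smul_mul_assoc]
    _ = exp (τ • (Complex.I • A x)) * A' x * exp (-(τ • (Complex.I • A x))) := by
        rw [smul_smul, inv_mul_cancel₀ Complex.I_ne_zero, one_smul]
    _ = exp (((τ : ℂ) * Complex.I) • A x) ∘L A' x ∘L
        exp (-(((τ : ℂ) * Complex.I) • A x)) := by
        rw [e1, ← ContinuousLinearMap.mul_def, ← ContinuousLinearMap.mul_def, mul_assoc]
end

section
/- Let x ↦ A(x) be a continuously differentiable family of self-adjoint operators on a finite-dimensional complex inner product space V such that A'(x) is positive definite for every x. Then the unitary family U(x) = e^{iA(x)} is monotone, i.e. D(x) := (1/i) U'(x) U(x)^{-1} is positive definite for every x. -/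
open scoped InnerProductSpace
open NormedSpace Filter

section aux

variable {𝔸 : Type*} [NormedRing 𝔸] [NormedAlgebra ℝ 𝔸] [CompleteSpace 𝔸]

lemma exp_continuous_real : Continuous (exp : 𝔸 → 𝔸) := by
  letI : NormedAlgebra ℚ 𝔸 := NormedAlgebra.restrictScalars ℚ ℝ 𝔸
  exact exp_continuous

lemma exp_add_of_commute_real {x y : 𝔸} (hxy : Commute x y) : exp (x + y) = exp x * exp y := by
  letI : NormedAlgebra ℚ 𝔸 := NormedAlgebra.restrictScalars ℚ ℝ 𝔸
  exact exp_add_of_commute hxy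

lemma exp_smul_continuous (B : 𝔸) : Continuous (fun s : ℝ => exp (s • B)) :=
  exp_continuous_real.comp (continuous_id.smul continuous_const)

lemma duhamel_fixed (B₁ B₂ : 𝔸) :
    exp B₁ - exp B₂ =
      ∫ s in (0:ℝ)..1, exp (s • B₁) * (B₁ - B₂) * exp ((1-s) • B₂) := by
  have hG : ∀ s : ℝ, HasDerivAt (fun u : ℝ => exp (u • B₁) * exp ((1-u) • B₂))
      (exp (s • B₁) * (B₁ - B₂) * exp ((1-s) • B₂)) s := by
    intro s
    have h1 : HasDerivAt (fun u : ℝ => exp (u • B₁)) (exp (s • B₁) * B₁) s :=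
      hasDerivAt_exp_smul_const B₁ s
    have hf : HasDerivAt (fun u : ℝ => 1 - u) (-1 : ℝ) s := by
      simpa using (hasDerivAt_id s).const_sub 1
    have h2 : HasDerivAt (fun u : ℝ => exp (u • B₂)) (B₂ * exp ((1-s) • B₂)) (1-s) :=
      hasDerivAt_exp_smul_const' B₂ (1-s)
    have h2' : HasDerivAt (fun u : ℝ => exp ((1-u) • B₂))
        ((-1 : ℝ) • (B₂ * exp ((1-s) • B₂))) s := h2.scomp s hf
    have h3 := h1.mul h2'
    convert h3 using 1
    · rfl
    simp only [neg_one_smul]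
    noncomm_ring
  have hcont : Continuous (fun s : ℝ => exp (s • B₁) * (B₁ - B₂) * exp ((1-s) • B₂)) :=
    ((exp_smul_continuous B₁).mul continuous_const).mul
      (exp_continuous_real.comp ((continuous_const.sub continuous_id).smul continuous_const))
  have hftc := intervalIntegral.integral_eq_sub_of_hasDerivAt
    (f := fun u : ℝ => exp (u • B₁) * exp ((1-u) • B₂)) (fun s _ => hG s)
    (hcont.intervalIntegrable 0 1)
  rw [hftc]
  simp [exp_zero]

lemma hasDerivAt_exp_of_hasDerivAt (B : ℝ → 𝔸) (B' : 𝔸) (x₀ : ℝ)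
    (hB : HasDerivAt B B' x₀) (hBc : Continuous B) :
    HasDerivAt (fun x => exp (B x))
      (∫ s in (0:ℝ)..1, exp (s • B x₀) * B' * exp ((1-s) • B x₀)) x₀ := by
  classical
  set F : ℝ → 𝔸 := Function.update (slope B x₀) x₀ B' with hF
  have hFx₀ : F x₀ = B' := Function.update_self _ _ _
  have hFne : ∀ y, y ≠ x₀ → F y = (y - x₀)⁻¹ • (B y - B x₀) := by
    intro y hy
    rw [hF, Function.update_of_ne hy, slope_def_module]
  have hFc : Continuous F := by
    rw [continuous_iff_continuousAt]
    intro y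
    rcases eq_or_ne y x₀ with rfl | hy
    · rw [ContinuousAt, hFx₀, ← nhdsNE_sup_pure y]
      refine Tendsto.sup ?_ ?_
      · refine (hasDerivAt_iff_tendsto_slope.mp hB).congr' ?_
        filter_upwards [self_mem_nhdsWithin] with z hz
        rw [hF, Function.update_of_ne hz]
      · rw [show B' = F y from hFx₀.symm]
        exact tendsto_pure_nhds F y
    · have hev : (fun z => (z - x₀)⁻¹ • (B z - B x₀)) =ᶠ[nhds y] F := by
        filter_upwards [isOpen_compl_singleton.mem_nhds hy] with z hz
        exact (hFne z hz).symm
      have hc : ContinuousAt (fun z => (z - x₀)⁻¹ • (B z - B x₀)) y :=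
        (((continuousAt_id.sub continuousAt_const).inv₀ (sub_ne_zero.2 hy)).smul
          ((hBc.continuousAt).sub continuousAt_const))
      exact hc.congr hev
  set Φ : ℝ → 𝔸 := fun y => ∫ s in (0:ℝ)..1, exp (s • B x₀) * F y * exp ((1-s) • B y)
    with hΦ
  have hΦc : Continuous Φ := by
    apply intervalIntegral.continuous_parametric_intervalIntegral_of_continuous'
    show Continuous fun p : ℝ × ℝ => exp (p.2 • B x₀) * F p.1 * exp ((1 - p.2) • B p.1)
    exact (((exp_smul_continuous (B x₀)).comp continuous_snd).mul (hFc.comp continuous_fst)).mul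
      (exp_continuous_real.comp ((continuous_const.sub continuous_snd).smul (hBc.comp continuous_fst)))
  have hkey : ∀ᶠ y in nhdsWithin x₀ {x₀}ᶜ, Φ y = slope (fun x => exp (B x)) x₀ y := by
    filter_upwards [self_mem_nhdsWithin] with y hy
    have hy' : (y : ℝ) ≠ x₀ := hy
    have h1 : Φ y = (y - x₀)⁻¹ • ∫ s in (0:ℝ)..1,
        exp (s • B x₀) * (B y - B x₀) * exp ((1-s) • B y) := by
      rw [hΦ, ← intervalIntegral.integral_smul]
      refine intervalIntegral.integral_congr (fun s _ => ?_)
      rw [hFne y hy', mul_smul_comm, smul_mul_assoc]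
    have h2 : (∫ s in (0:ℝ)..1, exp (s • B x₀) * (B y - B x₀) * exp ((1-s) • B y))
        = exp (B y) - exp (B x₀) := by
      have hd := duhamel_fixed (B x₀) (B y)
      have hneg : (∫ s in (0:ℝ)..1, exp (s • B x₀) * (B y - B x₀) * exp ((1-s) • B y))
          = - ∫ s in (0:ℝ)..1, exp (s • B x₀) * (B x₀ - B y) * exp ((1-s) • B y) := by
        rw [← intervalIntegral.integral_neg]
        refine intervalIntegral.integral_congr (fun s _ => ?_)
        rw [← neg_sub (B x₀) (B y), mul_neg, neg_mul]
      rw [hneg, ← hd]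
      abel
    rw [h1, h2, slope_def_module]
  have hΦx₀ : Φ x₀ = ∫ s in (0:ℝ)..1, exp (s • B x₀) * B' * exp ((1-s) • B x₀) := by
    rw [hΦ]
    simp only [hFx₀]
  rw [hasDerivAt_iff_tendsto_slope, ← hΦx₀]
  exact ((hΦc.tendsto x₀).mono_left nhdsWithin_le_nhds).congr' hkey

end aux

set_option maxHeartbeats 1000000 in
set_option synthInstance.maxHeartbeats 400000 in
/-- **Corollary.** If `A(x)` is a `C¹` family of self-adjoint operators with `A'(x)`
positive definite for all `x`, then the unitary family `U(x) = e^{iA(x)}` is monotone,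
i.e. `D(x) = (1/i)U'(x)U(x)⁻¹` is positive definite for every `x`. -/
theorem monotone_of_exp_of_positive_derivative
    {V : Type*} [NormedAddCommGroup V] [InnerProductSpace ℂ V] [FiniteDimensional ℂ V]
    (A A' : ℝ → (V →L[ℂ] V))
    (hsa : ∀ x, IsSelfAdjoint (A x))
    (hA' : ∀ x, HasDerivAt A (A' x) x)
    (hA'cont : Continuous A')
    (hpos : ∀ x, ∀ φ : V, φ ≠ 0 → 0 < (⟪A' x φ, φ⟫_ℂ).re)
    (U : ℝ → (V →L[ℂ] V))
    (hU : ∀ x, U x = NormedSpace.exp (Complex.I • A x))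
    (D : ℝ → (V →L[ℂ] V))
    (hD : ∀ x, D x = Complex.I⁻¹ • (deriv U x ∘L star (U x))) :
    ∀ x, ∀ φ : V, φ ≠ 0 → 0 < (⟪D x φ, φ⟫_ℂ).re := by
  intro x₀ φ hφ
  set B : ℝ → (V →L[ℂ] V) := fun x => Complex.I • A x with hBdef
  set E : ℝ → (V →L[ℂ] V) := fun t => exp (t • B x₀) with hEdef
  have hEmul : ∀ t u : ℝ, E t * E u = E (t + u) := by
    intro t u
    show exp (t • B x₀) * exp (u • B x₀) = exp ((t+u) • B x₀)
    rw [← exp_add_of_commute_real (((Commute.refl (B x₀)).smul_left t).smul_right u), add_smul]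
  have hB' : HasDerivAt B (Complex.I • A' x₀) x₀ := (hA' x₀).const_smul Complex.I
  have hAc : Continuous A := continuous_iff_continuousAt.mpr fun x => (hA' x).continuousAt
  have hBc : Continuous B := hAc.const_smul Complex.I
  have hUeq : U = fun x => exp (B x) := by
    funext x
    rw [hU x]
  have hder : HasDerivAt U
      (∫ s in (0:ℝ)..1, E s * (Complex.I • A' x₀) * E (1-s)) x₀ := by
    rw [hUeq]
    exact hasDerivAt_exp_of_hasDerivAt B (Complex.I • A' x₀) x₀ hB' hBc
  have hderiv : deriv U x₀ = ∫ s in (0:ℝ)..1, E s * (Complex.I • A' x₀) * E (1-s) :=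
    hder.deriv
  have hBsa : star (B x₀) = -(B x₀) := by
    show star (Complex.I • A x₀) = -(Complex.I • A x₀)
    rw [star_smul, (hsa x₀).star_eq, Complex.star_def, Complex.conj_I, neg_smul]
  have hstarE : ∀ t : ℝ, star (E t) = E (-t) := by
    intro t
    show star (exp (t • B x₀)) = exp ((-t) • B x₀)
    rw [star_exp, star_smul, star_trivial, hBsa, smul_neg, ← neg_smul]
  have hstarU : star (U x₀) = E (-1) := by
    have h1 : U x₀ = E 1 := by
      rw [hUeq]
      show exp (B x₀) = exp ((1:ℝ) • B x₀)
      rw [one_smul]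
    rw [h1, hstarE]
  have hintcont : Continuous (fun s : ℝ => E s * (Complex.I • A' x₀) * E (1-s)) := by
    show Continuous fun s : ℝ =>
      exp (s • B x₀) * (Complex.I • A' x₀) * exp ((1-s) • B x₀)
    exact ((exp_smul_continuous (B x₀)).mul continuous_const).mul
      ((exp_smul_continuous (B x₀)).comp (continuous_const.sub continuous_id))
  have hint : IntervalIntegrable (fun s : ℝ => E s * (Complex.I • A' x₀) * E (1-s))
      MeasureTheory.volume 0 1 := hintcont.intervalIntegrable 0 1
  set χ : ℝ → V := fun s => E (-s) φ with hχ
  have hχne : ∀ s, χ s ≠ 0 := by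
    intro s h
    apply hφ
    have h2 : E s (χ s) = φ := by
      show E s (E (-s) φ) = φ
      rw [← ContinuousLinearMap.mul_apply, hEmul]
      norm_num
      show exp ((0:ℝ) • B x₀) φ = φ
      rw [zero_smul, exp_zero, ContinuousLinearMap.one_apply]
    rw [h, map_zero] at h2
    exact h2.symm
  have happ : D x₀ φ = ∫ s in (0:ℝ)..1, E s (A' x₀ (χ s)) := by
    rw [hD x₀, hderiv, hstarU]
    rw [ContinuousLinearMap.smul_apply, ContinuousLinearMap.comp_apply]
    rw [ContinuousLinearMap.intervalIntegral_apply hint (E (-1) φ)]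
    have hterm : ∀ s : ℝ, (E s * (Complex.I • A' x₀) * E (1-s)) (E (-1) φ)
        = Complex.I • E s (A' x₀ (χ s)) := by
      intro s
      rw [ContinuousLinearMap.mul_apply, ContinuousLinearMap.mul_apply]
      have h1 : E (1-s) (E (-1) φ) = χ s := by
        rw [← ContinuousLinearMap.mul_apply, hEmul, show (1:ℝ)-s+-1 = -s by ring]
      rw [h1, ContinuousLinearMap.smul_apply, map_smul]
    rw [intervalIntegral.integral_congr (fun s _ => hterm s)]
    rw [intervalIntegral.integral_smul, smul_smul,
      inv_mul_cancel₀ Complex.I_ne_zero, one_smul]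
  have hχcont : Continuous χ := by
    have : Continuous fun s : ℝ => E (-s) := by
      show Continuous fun s : ℝ => exp ((-s) • B x₀)
      exact (exp_smul_continuous (B x₀)).comp continuous_neg
    exact this.clm_apply continuous_const
  have hvcont : Continuous (fun s : ℝ => E s (A' x₀ (χ s))) := by
    have hE : Continuous fun s : ℝ => E s := exp_smul_continuous (B x₀)
    exact hE.clm_apply (((A' x₀).continuous).comp hχcont)
  have hvint : IntervalIntegrable (fun s : ℝ => E s (A' x₀ (χ s)))
      MeasureTheory.volume 0 1 := hvcont.intervalIntegrable 0 1
  have hℓ : ∃ ℓ : V →L[ℝ] ℝ, ∀ v : V, ℓ v = (⟪φ, v⟫_ℂ).re :=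
    ⟨Complex.reCLM.comp ((innerSL ℂ φ).restrictScalars ℝ), fun v => rfl⟩
  obtain ⟨ℓ, hℓap⟩ := hℓ
  have hinner : (⟪D x₀ φ, φ⟫_ℂ).re = ∫ s in (0:ℝ)..1, (⟪A' x₀ (χ s), χ s⟫_ℂ).re := by
    rw [happ]
    have hsw : (⟪(∫ s in (0:ℝ)..1, E s (A' x₀ (χ s))), φ⟫_ℂ).re
        = ℓ (∫ s in (0:ℝ)..1, E s (A' x₀ (χ s))) := by
      rw [hℓap, ← inner_conj_symm, Complex.conj_re]
    rw [hsw, ← ℓ.intervalIntegral_comp_comm hvint]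
    refine intervalIntegral.integral_congr (fun s _ => ?_)
    rw [hℓap]
    have hadj : ContinuousLinearMap.adjoint (E s) = E (-s) := by
      rw [← hstarE s]; rfl
    have h3 := ContinuousLinearMap.adjoint_inner_left (E s) (A' x₀ (χ s)) φ
    rw [← h3, hadj]
    rw [show E (-s) φ = χ s from rfl, ← inner_conj_symm, Complex.conj_re]
  rw [hinner]
  have hgcont : Continuous (fun s : ℝ => (⟪A' x₀ (χ s), χ s⟫_ℂ).re) :=
    Complex.continuous_re.comp ((((A' x₀).continuous).comp hχcont).inner hχcont)
  exact intervalIntegral.intervalIntegral_pos_of_pos (hgcont.intervalIntegrable 0 1)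
    (fun s => hpos x₀ (χ s) (hχne s)) one_pos
end

section
/- Let V be a finite-dimensional complex inner product space, V = V₀ ⊕ V₁ an orthogonal direct sum decomposition, U a unitary operator on V, and W = U − I. Write W in block form W_{kl} : V_l → V_k (k,l ∈ {0,1}) with respect to this decomposition, and assume W₁₁ is invertible. Set W' := W₀₀ − W₀₁ W₁₁^{-1} W₁₀. Then: (a) for v₀ ∈ V₀ and v₁ ∈ V₁, W(v₀ ⊕ v₁) = 0 if and only if W'v₀ = 0 and v₁ = −W₁₁^{-1} W₁₀ v₀; in particular U has eigenvalue one if and only if the operator U' := I_{V₀} + W' on V₀ has eigenvalue one; and (b) U' is unitary on V₀. -/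
set_option maxHeartbeats 1000000
open ContinuousLinearMap

lemma aux_adj_one {H : Type*} [NormedAddCommGroup H] [InnerProductSpace ℂ H] [CompleteSpace H] :
    adjoint (1 : H →L[ℂ] H) = 1 := by
  rw [← star_eq_adjoint, star_one]

lemma aux_block_of_comp {V X Y E₀ E₁ : Type*}
    [NormedAddCommGroup V] [NormedSpace ℂ V]
    [NormedAddCommGroup X] [NormedSpace ℂ X]
    [NormedAddCommGroup Y] [NormedSpace ℂ Y]
    [NormedAddCommGroup E₀] [NormedSpace ℂ E₀]
    [NormedAddCommGroup E₁] [NormedSpace ℂ E₁]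
    (ι₀ : E₀ →L[ℂ] V) (P₀ : V →L[ℂ] E₀) (ι₁ : E₁ →L[ℂ] V) (P₁ : V →L[ℂ] E₁)
    (hid : ι₀ ∘L P₀ + ι₁ ∘L P₁ = 1)
    (S T : V →L[ℂ] V) (h : S ∘L T = 1)
    (p : V →L[ℂ] X) (i : Y →L[ℂ] V) :
    (p ∘L (S ∘L ι₀)) ∘L (P₀ ∘L (T ∘L i)) + (p ∘L (S ∘L ι₁)) ∘L (P₁ ∘L (T ∘L i))
      = p ∘L i := by
  have step : (p ∘L (S ∘L ι₀)) ∘L (P₀ ∘L (T ∘L i)) + (p ∘L (S ∘L ι₁)) ∘L (P₁ ∘L (T ∘L i))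
      = p ∘L ((S ∘L ((ι₀ ∘L P₀ + ι₁ ∘L P₁) ∘L T)) ∘L i) := by
    simp only [comp_add, add_comp, comp_assoc]
  rw [step, hid, one_def, id_comp, h, one_def, id_comp]

lemma aux_unitary {H₀ H₁ : Type*}
    [NormedAddCommGroup H₀] [InnerProductSpace ℂ H₀] [CompleteSpace H₀]
    [NormedAddCommGroup H₁] [InnerProductSpace ℂ H₁] [CompleteSpace H₁]
    (A : H₀ →L[ℂ] H₀) (B : H₁ →L[ℂ] H₀) (C : H₀ →L[ℂ] H₁) (D K : H₁ →L[ℂ] H₁)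
    (r1 : adjoint A ∘L A + adjoint C ∘L C = 1)
    (r3 : adjoint B ∘L A + adjoint D ∘L C = 0)
    (r4 : adjoint B ∘L B + adjoint D ∘L D = 1)
    (hK1 : (D - 1) ∘L K = 1) (hK2 : K ∘L (D - 1) = 1) :
    adjoint (A - B ∘L (K ∘L C)) ∘L (A - B ∘L (K ∘L C)) = 1 := by
  have e4 : adjoint K ∘L (adjoint D - 1) = 1 := by
    have h := congrArg adjoint hK1
    simpa [adjoint_comp, map_sub, aux_adj_one] using h
  have hDK : D * K = 1 + K := by
    have h := hK1
    rw [show (D - 1) ∘L K = D * K - K by rw [sub_comp]; rfl, sub_eq_iff_eq_add] at h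
    exact h
  have hK'D' : adjoint K * adjoint D = 1 + adjoint K := by
    have h := e4
    rw [show adjoint K ∘L (adjoint D - 1) = adjoint K * adjoint D - adjoint K by
      rw [comp_sub]; rfl, sub_eq_iff_eq_add] at h
    exact h
  have hX : adjoint K * ((1 - adjoint D * D) * K) + D * K + adjoint K * adjoint D - 1 = 0 := by
    have h5 : adjoint K * ((1 - adjoint D * D) * K)
        = adjoint K * K - (adjoint K * adjoint D) * (D * K) := by noncomm_ring
    rw [h5, hK'D', hDK]
    noncomm_ring
  have s1 : adjoint A ∘L A = 1 - adjoint C ∘L C := by rw [← r1]; abel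
  have s3 : adjoint B ∘L A = -(adjoint D ∘L C) := by rw [eq_neg_iff_add_eq_zero]; exact r3
  have s2 : ∀ Z : H₀ →L[ℂ] H₁, adjoint A ∘L (B ∘L Z) = -(adjoint C ∘L (D ∘L Z)) := by
    intro Z
    have h := congrArg adjoint r3
    simp only [map_add, adjoint_comp, adjoint_adjoint, map_zero] at h
    have h2 : adjoint A ∘L B = -(adjoint C ∘L D) := by
      rw [eq_neg_iff_add_eq_zero]; exact h
    rw [← comp_assoc, h2, neg_comp, comp_assoc]
  have h4 : adjoint B ∘L B = 1 - adjoint D ∘L D := by rw [← r4]; abel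
  have s4 : ∀ Z : H₀ →L[ℂ] H₁, adjoint B ∘L (B ∘L Z) = Z - adjoint D ∘L (D ∘L Z) := by
    intro Z
    rw [← comp_assoc, h4, sub_comp, one_def, id_comp, comp_assoc]
  have expand : adjoint (A - B ∘L (K ∘L C)) ∘L (A - B ∘L (K ∘L C)) =
      1 + adjoint C ∘L ((adjoint K * ((1 - adjoint D * D) * K) + D * K
        + adjoint K * adjoint D - 1) ∘L C) := by
    simp only [map_sub, adjoint_comp, mul_def]
    simp only [sub_comp, comp_sub, comp_add, add_comp, comp_assoc, one_def, id_comp,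
      neg_comp, comp_neg]
    rw [s1, s2, s3, s4]
    simp only [sub_comp, comp_sub, comp_add, add_comp, comp_assoc, one_def, id_comp,
      neg_comp, comp_neg]
    abel
  rw [expand, hX]
  simp


/-- **Block reduction.** Let `V = V₀ ⊕ V₁` orthogonally, `U` unitary, `W = U − I`,
with blocks `W_{kl}` and `W₁₁` invertible. With `W' = W₀₀ − W₀₁W₁₁⁻¹W₁₀`:
(a) `W(v₀ ⊕ v₁) = 0 ↔ (W'v₀ = 0 ∧ v₁ = −W₁₁⁻¹W₁₀v₀)`; in particular `U` has
eigenvalue one iff `U' = I + W'` has eigenvalue one; and (b) `U'` is unitary on `V₀`. -/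
theorem unitary_block_reduction
    {V : Type*} [NormedAddCommGroup V] [InnerProductSpace ℂ V] [FiniteDimensional ℂ V]
    (V₀ V₁ : Submodule ℂ V) (horth : V₁ = V₀ᗮ)
    (U : V →L[ℂ] V) (hU : U ∈ unitary (V →L[ℂ] V))
    (W : V →L[ℂ] V) (hW : W = U - 1)
    (W₀₀ : V₀ →L[ℂ] V₀) (W₀₁ : V₁ →L[ℂ] V₀)
    (W₁₀ : V₀ →L[ℂ] V₁) (W₁₁ : V₁ →L[ℂ] V₁)
    (hW₀₀ : W₀₀ = V₀.orthogonalProjectionOnto ∘L W ∘L V₀.subtypeL)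
    (hW₀₁ : W₀₁ = V₀.orthogonalProjectionOnto ∘L W ∘L V₁.subtypeL)
    (hW₁₀ : W₁₀ = V₁.orthogonalProjectionOnto ∘L W ∘L V₀.subtypeL)
    (hW₁₁ : W₁₁ = V₁.orthogonalProjectionOnto ∘L W ∘L V₁.subtypeL)
    (W₁₁inv : V₁ →L[ℂ] V₁)
    (hinv : W₁₁ ∘L W₁₁inv = 1 ∧ W₁₁inv ∘L W₁₁ = 1)
    (W' : V₀ →L[ℂ] V₀)
    (hW' : W' = W₀₀ - W₀₁ ∘L W₁₁inv ∘L W₁₀) :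
    (∀ (v₀ : V₀) (v₁ : V₁),
        (W ((v₀ : V) + (v₁ : V)) = 0 ↔ W' v₀ = 0 ∧ v₁ = -(W₁₁inv (W₁₀ v₀)))) ∧
    ((∃ v : V, v ≠ 0 ∧ U v = v) ↔ (∃ v₀ : V₀, v₀ ≠ 0 ∧ (1 + W') v₀ = v₀)) ∧
    (1 + W') ∈ unitary (V₀ →L[ℂ] V₀) := by
  subst horth
  set P₀ : V →L[ℂ] V₀ := V₀.orthogonalProjectionOnto with hP₀
  set P₁ : V →L[ℂ] V₀ᗮ := V₀ᗮ.orthogonalProjectionOnto with hP₁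
  have hP : ∀ x : V, ((P₀ x : V) + (P₁ x : V)) = x := fun x =>
    Submodule.starProjection_add_starProjection_orthogonal (K := V₀) x
  have hid : V₀.subtypeL ∘L P₀ + V₀ᗮ.subtypeL ∘L P₁ = 1 := by
    ext x
    simpa using hP x
  have p00 : P₀ ∘L V₀.subtypeL = 1 := by
    ext v; simp [hP₀, Submodule.orthogonalProjectionOnto_mem_subspace_eq_self]
  have p11 : P₁ ∘L V₀ᗮ.subtypeL = 1 := by
    ext v; simp [hP₁, Submodule.orthogonalProjectionOnto_mem_subspace_eq_self]
  have p01 : P₀ ∘L V₀ᗮ.subtypeL = 0 := by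
    ext v
    simpa [hP₀] using (Submodule.starProjection_apply_eq_zero_iff
      (K := V₀)).2 v.2
  have p10 : P₁ ∘L V₀.subtypeL = 0 := by
    ext v
    have hv : (v : V) ∈ V₀ᗮᗮ := by
      rw [Submodule.orthogonal_orthogonal]; exact v.2
    simpa [hP₁] using Submodule.orthogonalProjectionOnto_apply_of_mem_orthogonal
      (K := V₀ᗮ) hv
  -- block values pointwise
  have bW0 : ∀ (v₀ : V₀) (v₁ : V₀ᗮ), P₀ (W ((v₀ : V) + (v₁ : V))) = W₀₀ v₀ + W₀₁ v₁ := by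
    intro v₀ v₁
    rw [hW₀₀, hW₀₁]
    simp
  have bW1 : ∀ (v₀ : V₀) (v₁ : V₀ᗮ), P₁ (W ((v₀ : V) + (v₁ : V))) = W₁₀ v₀ + W₁₁ v₁ := by
    intro v₀ v₁
    rw [hW₁₀, hW₁₁]
    simp
  have hdecomp : ∀ x : V, x = 0 ↔ P₀ x = 0 ∧ P₁ x = 0 := by
    intro x
    constructor
    · rintro rfl; simp
    · rintro ⟨h0, h1⟩
      rw [← hP x, h0, h1]
      simp
  -- Part (a)
  have parta : ∀ (v₀ : V₀) (v₁ : V₀ᗮ),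
      (W ((v₀ : V) + (v₁ : V)) = 0 ↔ W' v₀ = 0 ∧ v₁ = -(W₁₁inv (W₁₀ v₀))) := by
    intro v₀ v₁
    rw [hdecomp, bW0, bW1]
    constructor
    · rintro ⟨h0, h1⟩
      have hv₁ : v₁ = -(W₁₁inv (W₁₀ v₀)) := by
        have h2 := congrArg W₁₁inv h1
        rw [map_add, map_zero] at h2
        have h3 : W₁₁inv (W₁₁ v₁) = v₁ := by
          rw [← ContinuousLinearMap.comp_apply, hinv.2, ContinuousLinearMap.one_apply]
        rw [h3] at h2
        exact eq_neg_of_add_eq_zero_right h2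
      refine ⟨?_, hv₁⟩
      rw [hW']
      have : W₀₁ v₁ = -(W₀₁ (W₁₁inv (W₁₀ v₀))) := by rw [hv₁, map_neg]
      rw [this] at h0
      simpa [sub_eq_add_neg] using h0
    · rintro ⟨h0, rfl⟩
      constructor
      · rw [hW'] at h0
        simpa [sub_eq_add_neg] using h0
      · have h3 : W₁₁ (W₁₁inv (W₁₀ v₀)) = W₁₀ v₀ := by
          rw [← ContinuousLinearMap.comp_apply, hinv.1, ContinuousLinearMap.one_apply]
        rw [map_neg, h3]
        simp
  refine ⟨parta, ?_, ?_⟩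
  -- Part: eigenvalue transfer
  · have hUv : ∀ v : V, U v = v ↔ W v = 0 := by
      intro v
      rw [hW]
      simp [sub_apply, sub_eq_zero]
    have h1W : ∀ v₀ : V₀, (1 + W') v₀ = v₀ ↔ W' v₀ = 0 := by
      intro v₀
      rw [ContinuousLinearMap.add_apply, ContinuousLinearMap.one_apply, add_eq_left]
    constructor
    · rintro ⟨v, hv0, hUvv⟩
      have hWv : W ((P₀ v : V) + (P₁ v : V)) = 0 := by
        rw [hP v]; exact (hUv v).1 hUvv
      obtain ⟨h0, h1⟩ := (parta _ _).1 hWv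
      refine ⟨P₀ v, ?_, (h1W _).2 h0⟩
      intro hz
      apply hv0
      rw [← hP v, hz, h1, hz]
      simp
    · rintro ⟨v₀, hv0, hfix⟩
      have h0 : W' v₀ = 0 := (h1W _).1 hfix
      refine ⟨(v₀ : V) + ((-(W₁₁inv (W₁₀ v₀)) : V₀ᗮ) : V), ?_, ?_⟩
      · intro hz
        apply hv0
        have := congrArg P₀ hz
        rw [map_add, map_zero] at this
        have e0 : P₀ (v₀ : V) = v₀ := by
          have := congrFun (congrArg DFunLike.coe p00) v₀
          simpa using this
        have e1 : P₀ ((-(W₁₁inv (W₁₀ v₀)) : V₀ᗮ) : V) = 0 := by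
          have := congrFun (congrArg DFunLike.coe p01) (-(W₁₁inv (W₁₀ v₀)))
          simpa using this
        rw [e0, e1, add_zero] at this
        exact this
      · rw [hUv]
        exact (parta v₀ _).2 ⟨h0, rfl⟩
  -- Part (b): unitarity
  · have aι₀ : adjoint V₀.subtypeL = P₀ := V₀.adjoint_subtypeL
    have aι₁ : adjoint V₀ᗮ.subtypeL = P₁ := V₀ᗮ.adjoint_subtypeL
    have aP₀ : adjoint P₀ = V₀.subtypeL := V₀.adjoint_orthogonalProjectionOnto
    have aP₁ : adjoint P₁ = V₀ᗮ.subtypeL := V₀ᗮ.adjoint_orthogonalProjectionOnto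
    have hU1 : U = W + 1 := by rw [hW]; abel
    have hbA : P₀ ∘L (U ∘L V₀.subtypeL) = 1 + W₀₀ := by
      rw [hU1, hW₀₀, add_comp, comp_add, one_def, id_comp, p00]
      abel
    have hbB : P₀ ∘L (U ∘L V₀ᗮ.subtypeL) = W₀₁ := by
      rw [hU1, hW₀₁, add_comp, comp_add, one_def, id_comp, p01]
      abel
    have hbC : P₁ ∘L (U ∘L V₀.subtypeL) = W₁₀ := by
      rw [hU1, hW₁₀, add_comp, comp_add, one_def, id_comp, p10]
      abel
    have hbD : P₁ ∘L (U ∘L V₀ᗮ.subtypeL) = 1 + W₁₁ := by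
      rw [hU1, hW₁₁, add_comp, comp_add, one_def, id_comp, p11]
      abel
    have haA : P₀ ∘L (adjoint U ∘L V₀.subtypeL) = adjoint (1 + W₀₀) := by
      have h := congrArg adjoint hbA
      rw [adjoint_comp, adjoint_comp, aι₀, aP₀] at h
      rw [← h]
      simp only [comp_assoc]
    have haB : P₁ ∘L (adjoint U ∘L V₀.subtypeL) = adjoint W₀₁ := by
      have h := congrArg adjoint hbB
      rw [adjoint_comp, adjoint_comp, aι₁, aP₀] at h
      rw [← h]
      simp only [comp_assoc]
    have haC : P₀ ∘L (adjoint U ∘L V₀ᗮ.subtypeL) = adjoint W₁₀ := by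
      have h := congrArg adjoint hbC
      rw [adjoint_comp, adjoint_comp, aι₀, aP₁] at h
      rw [← h]
      simp only [comp_assoc]
    have haD : P₁ ∘L (adjoint U ∘L V₀ᗮ.subtypeL) = adjoint (1 + W₁₁) := by
      have h := congrArg adjoint hbD
      rw [adjoint_comp, adjoint_comp, aι₁, aP₁] at h
      rw [← h]
      simp only [comp_assoc]
    have hUU : adjoint U ∘L U = 1 := by
      have h := (Unitary.mem_iff.mp hU).1
      rw [star_eq_adjoint, mul_def] at h
      exact h
    have hUU2 : U ∘L adjoint U = 1 := by
      have h := (Unitary.mem_iff.mp hU).2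
      rw [star_eq_adjoint, mul_def] at h
      exact h
    have hK1 : ((1 + W₁₁) - 1) ∘L W₁₁inv = 1 := by
      rw [add_sub_cancel_left]; exact hinv.1
    have hK2 : W₁₁inv ∘L ((1 + W₁₁) - 1) = 1 := by
      rw [add_sub_cancel_left]; exact hinv.2
    have r1 := aux_block_of_comp V₀.subtypeL P₀ V₀ᗮ.subtypeL P₁ hid (adjoint U) U hUU
      P₀ V₀.subtypeL
    rw [p00, haA, haC, hbA, hbC] at r1
    have r3 := aux_block_of_comp V₀.subtypeL P₀ V₀ᗮ.subtypeL P₁ hid (adjoint U) U hUU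
      P₁ V₀.subtypeL
    rw [p10, haB, haD, hbA, hbC] at r3
    have r4 := aux_block_of_comp V₀.subtypeL P₀ V₀ᗮ.subtypeL P₁ hid (adjoint U) U hUU
      P₁ V₀ᗮ.subtypeL
    rw [p11, haB, haD, hbB, hbD] at r4
    have main1 := aux_unitary (1 + W₀₀) W₀₁ W₁₀ (1 + W₁₁) W₁₁inv r1 r3 r4 hK1 hK2
    have r1' := aux_block_of_comp V₀.subtypeL P₀ V₀ᗮ.subtypeL P₁ hid U (adjoint U) hUU2
      P₀ V₀.subtypeL
    rw [p00, hbA, hbB, haA, haB] at r1'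
    have r3' := aux_block_of_comp V₀.subtypeL P₀ V₀ᗮ.subtypeL P₁ hid U (adjoint U) hUU2
      P₁ V₀.subtypeL
    rw [p10, hbC, hbD, haA, haB] at r3'
    have r4' := aux_block_of_comp V₀.subtypeL P₀ V₀ᗮ.subtypeL P₁ hid U (adjoint U) hUU2
      P₁ V₀ᗮ.subtypeL
    rw [p11, hbC, hbD, haC, haD] at r4'
    have hK1' : (adjoint (1 + W₁₁) - 1) ∘L adjoint W₁₁inv = 1 := by
      have h := congrArg adjoint hK2
      simpa [adjoint_comp, map_sub, aux_adj_one] using h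
    have hK2' : adjoint W₁₁inv ∘L (adjoint (1 + W₁₁) - 1) = 1 := by
      have h := congrArg adjoint hK1
      simpa [adjoint_comp, map_sub, aux_adj_one] using h
    have main2 := aux_unitary (adjoint (1 + W₀₀)) (adjoint W₁₀) (adjoint W₀₁)
      (adjoint (1 + W₁₁)) (adjoint W₁₁inv)
      (by rw [adjoint_adjoint, adjoint_adjoint]; exact r1')
      (by rw [adjoint_adjoint, adjoint_adjoint]; exact r3')
      (by rw [adjoint_adjoint, adjoint_adjoint]; exact r4')
      hK1' hK2'
    have hadjT : adjoint (1 + W₀₀) - adjoint W₁₀ ∘L (adjoint W₁₁inv ∘L adjoint W₀₁)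
        = adjoint ((1 + W₀₀) - W₀₁ ∘L (W₁₁inv ∘L W₁₀)) := by
      rw [map_sub, adjoint_comp, adjoint_comp]
      simp only [comp_assoc]
    rw [hadjT, adjoint_adjoint] at main2
    have hT : (1 + W' : V₀ →L[ℂ] V₀) = (1 + W₀₀) - W₀₁ ∘L (W₁₁inv ∘L W₁₀) := by
      rw [hW']; abel
    rw [Unitary.mem_iff]
    constructor
    · rw [star_eq_adjoint, mul_def, hT]
      exact main1
    · rw [star_eq_adjoint, mul_def, hT]
      exact main2
end
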